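/- arXiv:0805.1026 — 10 statements merged into one kernel-verified Lean document; each statement's English description precedes it below -/
import Mathlib

section
/- Suppose the linear functional c satisfies the σ-ordering condition, i.e. ⟨c,u(σ 1)⟩ > ⟨c,u(σ 2)⟩ > ... > ⟨c,u(σ k)⟩ and ⟨c,u(σ k)⟩ > ⟨c,u j⟩ for every index j not in the range of σ. Then the point p_σ = Σ_{i=1}^k α_i u(σ i) is an extreme point (vertex) of the k-ordertope P_k. (This is the 'if' direction of Theorem 2.1.) -/
open scoped RealInnerProductSpace

open Finset

private lemma abel_aux (a x : ℕ → ℝ) (K : ℕ) :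
    ∑ i ∈ range K, a i * x i =
      (∑ m ∈ range K, (a m - a (m + 1)) * ∑ i ∈ range (m + 1), x i)
        + a K * ∑ i ∈ range K, x i := by
  induction K with
  | zero => simp
  | succ K ih =>
    rw [sum_range_succ, ih,
      sum_range_succ (fun m => (a m - a (m + 1)) * ∑ i ∈ range (m + 1), x i),
      sum_range_succ x]
    ring

private lemma sum_sets_aux {N : ℕ} (γ : Fin N → ℝ) (A B : Finset (Fin N)) (M : ℝ)
    (hcard : A.card = B.card)
    (h1 : ∀ a ∈ A, a ∉ B → γ a < M)
    (h2 : ∀ b ∈ B, M ≤ γ b) :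
    (∑ j ∈ A, γ j ≤ ∑ j ∈ B, γ j) ∧ (A ≠ B → ∑ j ∈ A, γ j < ∑ j ∈ B, γ j) := by
  classical
  have hsd : (A \ B).card = (B \ A).card := Finset.card_sdiff_comm hcard
  have hA : ∑ j ∈ A ∩ B, γ j + ∑ j ∈ A \ B, γ j = ∑ j ∈ A, γ j :=
    Finset.sum_inter_add_sum_sdiff A B γ
  have hB : ∑ j ∈ A ∩ B, γ j + ∑ j ∈ B \ A, γ j = ∑ j ∈ B, γ j := by
    rw [Finset.inter_comm]
    exact Finset.sum_inter_add_sum_sdiff B A γ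
  by_cases hemp : (A \ B).Nonempty
  · have l1 : ∑ j ∈ A \ B, γ j < ∑ j ∈ A \ B, (fun _ => M) j := by
      refine Finset.sum_lt_sum_of_nonempty hemp ?_
      intro i hi
      exact h1 i (Finset.mem_sdiff.1 hi).1 (Finset.mem_sdiff.1 hi).2
    have l2 : ∑ j ∈ B \ A, (fun _ => M) j ≤ ∑ j ∈ B \ A, γ j := by
      refine Finset.sum_le_sum ?_
      intro i hi
      exact h2 i (Finset.mem_sdiff.1 hi).1
    have l3 : ∑ j ∈ A \ B, (fun _ => M) j = ∑ j ∈ B \ A, (fun _ => M) j := by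
      simp [hsd]
    constructor
    · linarith
    · intro _; linarith
  · have hsub : A ⊆ B := by
      intro a ha
      by_contra hna
      exact hemp ⟨a, Finset.mem_sdiff.2 ⟨ha, hna⟩⟩
    have hAB : A = B := Finset.eq_of_subset_of_card_le hsub (le_of_eq hcard.symm)
    subst hAB
    exact ⟨le_refl _, fun h => absurd rfl h⟩

/-- 'If' direction of Theorem 2.1: if the functional `c` satisfies the σ-ordering
condition, then `p_σ = ∑ i, α i • u (σ i)` is a vertex (extreme point) of the
`k`-ordertope `P_k`. -/
theorem ordertope_vertex_of_ordering
    (d n k : ℕ) (hd : 0 < d) (hn : 0 < n) (hk : 0 < k) (hkn : k ≤ n)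
    (u : Fin n → EuclideanSpace ℝ (Fin d)) (hu : Function.Injective u)
    (α : Fin k → ℝ) (hα : StrictAnti α) (hαpos : ∀ i, 0 < α i)
    (σ : Fin k → Fin n) (hσ : Function.Injective σ)
    (c : EuclideanSpace ℝ (Fin d))
    (hord : ∀ i j : Fin k, i < j → ⟪c, u (σ j)⟫ < ⟪c, u (σ i)⟫)
    (hout : ∀ j : Fin n, j ∉ Set.range σ →
      ⟪c, u j⟫ < ⟪c, u (σ ⟨k - 1, Nat.sub_lt hk Nat.one_pos⟩)⟫) :
    (∑ i : Fin k, α i • u (σ i)) ∈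
      Set.extremePoints ℝ (convexHull ℝ
        {x : EuclideanSpace ℝ (Fin d) |
          ∃ τ : Fin k → Fin n, Function.Injective τ ∧ x = ∑ i : Fin k, α i • u (τ i)}) := by
  classical
  set S : Set (EuclideanSpace ℝ (Fin d)) :=
    {x : EuclideanSpace ℝ (Fin d) |
      ∃ τ : Fin k → Fin n, Function.Injective τ ∧ x = ∑ i : Fin k, α i • u (τ i)} with hSdef
  have hk1 : k - 1 < k := Nat.sub_lt hk Nat.one_pos
  have hγ : True := trivial
  let γ : Fin n → ℝ := fun j => ⟪c, u j⟫
  have hord' : ∀ i j : Fin k, i < j → γ (σ j) < γ (σ i) := hord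
  have hout' : ∀ j : Fin n, j ∉ Set.range σ → γ j < γ (σ ⟨k - 1, hk1⟩) := by
    intro j hj; exact hout j hj
  -- extend a map `Fin k → Fin n` to `ℕ → Fin n`
  let ext : (Fin k → Fin n) → ℕ → Fin n :=
    fun t i => t ⟨min i (k - 1), Nat.lt_of_le_of_lt (Nat.min_le_right _ _) hk1⟩
  have hext_lt : ∀ (t : Fin k → Fin n) (i : ℕ) (h : i < k), ext t i = t ⟨i, h⟩ := by
    intro t i h
    have hmin : min i (k - 1) = i := Nat.min_eq_left (by omega)
    show t _ = t _
    congr 1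
    exact Fin.ext hmin
  let a : ℕ → ℝ := fun m => if h : m < k then α ⟨m, h⟩ else 0
  have ha_lt : ∀ (m : ℕ) (h : m < k), a m = α ⟨m, h⟩ := by
    intro m h; simp [a, h]
  have hak : a k = 0 := by simp [a]
  -- conversion to range sums
  have conv : ∀ t : Fin k → Fin n,
      ∑ i : Fin k, α i * γ (t i) = ∑ i ∈ range k, a i * γ (ext t i) := by
    intro t
    rw [← Fin.sum_univ_eq_sum_range (fun i => a i * γ (ext t i)) k]
    refine Finset.sum_congr rfl ?_
    intro i _
    rw [ha_lt i.1 i.isLt, hext_lt t i.1 i.isLt]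
  -- the key strict separation
  have key : ∀ τ : Fin k → Fin n, Function.Injective τ → τ ≠ σ →
      ∑ i : Fin k, α i * γ (τ i) < ∑ i : Fin k, α i * γ (σ i) := by
    intro τ hτ hτσ
    have hextinj : ∀ (t : Fin k → Fin n), Function.Injective t →
        ∀ i ∈ range k, ∀ j ∈ range k, ext t i = ext t j → i = j := by
      intro t ht i hi j hj h
      rw [Finset.mem_range] at hi hj
      rw [hext_lt t i hi, hext_lt t j hj] at h
      exact congrArg Fin.val (ht h)
    have himg : ∀ (t : Fin k → Fin n), Function.Injective t → ∀ m < k,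
        ∑ j ∈ (range (m + 1)).image (ext t), γ j =
          ∑ i ∈ range (m + 1), γ (ext t i) := by
      intro t ht m hm
      refine Finset.sum_image ?_
      intro i hi j hj h
      refine hextinj t ht i ?_ j ?_ h <;>
        · rw [Finset.mem_coe, Finset.mem_range] at *; omega
    have hcards : ∀ (t : Fin k → Fin n), Function.Injective t → ∀ m < k,
        ((range (m + 1)).image (ext t)).card = m + 1 := by
      intro t ht m hm
      rw [Finset.card_image_of_injOn, Finset.card_range]
      intro i hi j hj h
      refine hextinj t ht i ?_ j ?_ h <;>
        · rw [Finset.mem_coe, Finset.mem_range] at *; omega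
    have hcompare : ∀ m (hm : m < k),
        (∑ i ∈ range (m + 1), γ (ext τ i) ≤ ∑ i ∈ range (m + 1), γ (ext σ i)) ∧
        ((range (m + 1)).image (ext τ) ≠ (range (m + 1)).image (ext σ) →
          ∑ i ∈ range (m + 1), γ (ext τ i) < ∑ i ∈ range (m + 1), γ (ext σ i)) := by
      intro m hm
      have hMσ : ∀ b ∈ (range (m + 1)).image (ext σ), γ (σ ⟨m, hm⟩) ≤ γ b := by
        intro b hb
        obtain ⟨i, hi, rfl⟩ := Finset.mem_image.1 hb
        rw [Finset.mem_range] at hi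
        have hik : i < k := by omega
        rw [hext_lt σ i hik]
        rcases eq_or_lt_of_le (Nat.lt_succ_iff.1 hi) with h | h
        · subst h; exact le_of_eq rfl
        · exact le_of_lt (hord' ⟨i, hik⟩ ⟨m, hm⟩ h)
      have hAout : ∀ b ∈ (range (m + 1)).image (ext τ),
          b ∉ (range (m + 1)).image (ext σ) → γ b < γ (σ ⟨m, hm⟩) := by
        intro b hb hbn
        by_cases hbr : b ∈ Set.range σ
        · obtain ⟨j, rfl⟩ := hbr
          have hjm : m < j.1 := by
            by_contra hle
            push_neg at hle
            refine hbn (Finset.mem_image.2 ⟨j.1, Finset.mem_range.2 (by omega), ?_⟩)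
            rw [hext_lt σ j.1 j.isLt]
          exact hord' ⟨m, hm⟩ j hjm
        · have h1 := hout' b hbr
          have h2 : γ (σ ⟨k - 1, hk1⟩) ≤ γ (σ ⟨m, hm⟩) := by
            rcases eq_or_lt_of_le (by omega : m ≤ k - 1) with h | h
            · subst h; exact le_of_eq rfl
            · exact le_of_lt (hord' ⟨m, hm⟩ ⟨k - 1, hk1⟩ h)
          exact lt_of_lt_of_le h1 h2
      have hmain := sum_sets_aux γ ((range (m + 1)).image (ext τ))
        ((range (m + 1)).image (ext σ)) (γ (σ ⟨m, hm⟩))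
        (by rw [hcards τ hτ m hm, hcards σ hσ m hm]) hAout hMσ
      rw [himg τ hτ m hm, himg σ hσ m hm] at hmain
      exact hmain
    -- the first index where τ and σ differ
    have hne : ∃ i : ℕ, i < k ∧ ext τ i ≠ ext σ i := by
      have hex : ∃ i : Fin k, τ i ≠ σ i := by
        by_contra h
        push_neg at h
        exact hτσ (funext h)
      obtain ⟨i, hi⟩ := hex
      refine ⟨i.1, i.isLt, ?_⟩
      rw [hext_lt τ i.1 i.isLt, hext_lt σ i.1 i.isLt]
      exact hi
    set i0 := Nat.find hne with hi0def
    have hi0 := Nat.find_spec hne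
    have hi0min : ∀ j, j < i0 → ext τ j = ext σ j := by
      intro j hj
      have h := Nat.find_min hne hj
      push_neg at h
      exact h (by omega)
    have hPne : (range (i0 + 1)).image (ext τ) ≠ (range (i0 + 1)).image (ext σ) := by
      intro hEq
      have hmem : ext τ i0 ∈ (range (i0 + 1)).image (ext σ) := by
        rw [← hEq]
        exact Finset.mem_image_of_mem _ (Finset.self_mem_range_succ i0)
      obtain ⟨i, hi, hiEq⟩ := Finset.mem_image.1 hmem
      rw [Finset.mem_range, Nat.lt_succ_iff] at hi
      rcases eq_or_lt_of_le hi with h | h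
      · subst h; exact hi0.2 hiEq.symm
      · have h2 : ext τ i = ext τ i0 := by rw [hi0min i h]; exact hiEq
        have : i = i0 := by
          refine hextinj τ hτ i (Finset.mem_range.2 (by omega)) i0
            (Finset.mem_range.2 hi0.1) h2
        omega
    have hD : ∀ m ∈ range k, 0 < a m - a (m + 1) := by
      intro m hmr
      have hm := Finset.mem_range.1 hmr
      rw [ha_lt m hm]
      by_cases h : m + 1 < k
      · rw [ha_lt (m + 1) h]
        have := hα (Fin.mk_lt_mk.2 (Nat.lt_succ_self m) : (⟨m, hm⟩ : Fin k) < ⟨m + 1, h⟩)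
        linarith
      · have hz : a (m + 1) = 0 := by simp [a, h]
        rw [hz]
        simpa using hαpos ⟨m, hm⟩
    rw [conv τ, conv σ, abel_aux a (fun i => γ (ext τ i)) k,
      abel_aux a (fun i => γ (ext σ i)) k, hak]
    simp only [zero_mul, add_zero]
    refine Finset.sum_lt_sum ?_ ⟨i0, Finset.mem_range.2 hi0.1, ?_⟩
    · intro m hmr
      exact mul_le_mul_of_nonneg_left
        ((hcompare m (Finset.mem_range.1 hmr)).1) (le_of_lt (hD m hmr))
    · exact mul_lt_mul_of_pos_left ((hcompare i0 hi0.1).2 hPne)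
        (hD i0 (Finset.mem_range.2 hi0.1))
  -- assembling the extreme point proof
  have hip : ∀ t : Fin k → Fin n,
      ⟪c, ∑ i : Fin k, α i • u (t i)⟫ = ∑ i : Fin k, α i * γ (t i) := by
    intro t
    rw [inner_sum]
    exact Finset.sum_congr rfl fun i _ => real_inner_smul_right c (u (t i)) (α i)
  set p : EuclideanSpace ℝ (Fin d) := ∑ i : Fin k, α i • u (σ i) with hpdef
  set M : ℝ := ∑ i : Fin k, α i * γ (σ i) with hMdef
  have hpM : ⟪c, p⟫ = M := hip σ
  have hSle : ∀ y ∈ S, ⟪c, y⟫ ≤ M := by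
    rintro y ⟨τ, hτ, rfl⟩
    rw [hip τ]
    by_cases hts : τ = σ
    · subst hts; exact le_refl _
    · exact le_of_lt (key τ hτ hts)
  have hSeq : ∀ y ∈ S, ⟪c, y⟫ = M → y = p := by
    rintro y ⟨τ, hτ, rfl⟩ hy
    by_cases hts : τ = σ
    · subst hts; rfl
    · rw [hip τ] at hy
      exact absurd hy (ne_of_lt (key τ hτ hts))
  have hlin : IsLinearMap ℝ (fun y : EuclideanSpace ℝ (Fin d) => ⟪c, y⟫) :=
    ⟨fun x y => inner_add_right c x y, fun r x => real_inner_smul_right c x r⟩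
  have hhull_le : ∀ y ∈ convexHull ℝ S, ⟪c, y⟫ ≤ M := fun y hy =>
    convexHull_min hSle (convex_halfSpace_le hlin M) hy
  have hhull_eq : ∀ y ∈ convexHull ℝ S, ⟪c, y⟫ = M → y = p := by
    intro y hy hyM
    rw [_root_.convexHull_eq] at hy
    obtain ⟨ι, t, w, z, hw0, hw1, hz, hcm⟩ := hy
    have hyrep : y = ∑ i ∈ t, w i • z i := by
      rw [← hcm, Finset.centerMass_eq_of_sum_1 _ _ hw1]
    have hipy : ⟪c, y⟫ = ∑ i ∈ t, w i * ⟪c, z i⟫ := by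
      rw [hyrep, inner_sum]
      exact Finset.sum_congr rfl fun i _ => real_inner_smul_right c (z i) (w i)
    have hsum0 : ∑ i ∈ t, w i * (M - ⟪c, z i⟫) = 0 := by
      have : ∑ i ∈ t, w i * (M - ⟪c, z i⟫)
          = (∑ i ∈ t, w i) * M - ∑ i ∈ t, w i * ⟪c, z i⟫ := by
        rw [Finset.sum_mul, ← Finset.sum_sub_distrib]
        exact Finset.sum_congr rfl fun i _ => by ring
      rw [this, hw1, one_mul, ← hipy, hyM, sub_self]
    have hterm : ∀ i ∈ t, w i * (M - ⟪c, z i⟫) = 0 :=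
      (Finset.sum_eq_zero_iff_of_nonneg fun i hi =>
        mul_nonneg (hw0 i hi) (sub_nonneg.2 (hSle (z i) (hz i hi)))).1 hsum0
    have hzp : ∀ i ∈ t, w i • z i = w i • p := by
      intro i hi
      by_cases hwi : w i = 0
      · rw [hwi, zero_smul, zero_smul]
      · have h0 := hterm i hi
        have hMz : ⟪c, z i⟫ = M := by
          rcases mul_eq_zero.1 h0 with h | h
          · exact absurd h hwi
          · linarith [sub_eq_zero.1 h]
        rw [hSeq (z i) (hz i hi) hMz]
    rw [hyrep, Finset.sum_congr rfl hzp, ← Finset.sum_smul, hw1, one_smul]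
  rw [mem_extremePoints]
  refine ⟨subset_convexHull ℝ S ⟨σ, hσ, rfl⟩, ?_⟩
  intro x₁ hx₁ x₂ hx₂ hseg
  obtain ⟨ra, rb, hra, hrb, hrab, hx⟩ := hseg
  have h1 := hhull_le x₁ hx₁
  have h2 := hhull_le x₂ hx₂
  have hxM : ra * ⟪c, x₁⟫ + rb * ⟪c, x₂⟫ = M := by
    have : ⟪c, ra • x₁ + rb • x₂⟫ = ra * ⟪c, x₁⟫ + rb * ⟪c, x₂⟫ := by
      rw [inner_add_right, real_inner_smul_right, real_inner_smul_right]
    rw [← this, hx, hpM]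
  have hM1 : ra * M + rb * M = M := by rw [← add_mul, hrab, one_mul]
  have e1 : ⟪c, x₁⟫ = M := by
    by_contra hne
    have hlt := mul_lt_mul_of_pos_left (lt_of_le_of_ne h1 hne) hra
    have hle := mul_le_mul_of_nonneg_left h2 (le_of_lt hrb)
    linarith
  have e2 : ⟪c, x₂⟫ = M := by
    by_contra hne
    have hlt := mul_lt_mul_of_pos_left (lt_of_le_of_ne h2 hne) hrb
    have hle := mul_le_mul_of_nonneg_left h1 (le_of_lt hra)
    linarith
  exact ⟨hhull_eq x₁ hx₁ e1, hhull_eq x₂ hx₂ e2⟩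
end

section
/- Suppose the point p_σ = Σ_{i=1}^k α_i u(σ i) is an extreme point (vertex) of the k-ordertope P_k. Then there exists a linear functional c satisfying the σ-ordering condition, i.e. ⟨c,u(σ 1)⟩ > ⟨c,u(σ 2)⟩ > ... > ⟨c,u(σ k)⟩ and ⟨c,u(σ k)⟩ > ⟨c,u j⟩ for every index j not in the range of σ. (This is the 'only if' direction of Theorem 2.1.) -/
open scoped RealInnerProductSpace

/-- 'Only if' direction of Theorem 2.1: if `p_σ = ∑ i, α i • u (σ i)` is a vertex
(extreme point) of the `k`-ordertope `P_k`, then there is a functional `c`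
satisfying the σ-ordering condition. -/
theorem ordering_of_ordertope_vertex
    (d n k : ℕ) (hd : 0 < d) (hn : 0 < n) (hk : 0 < k) (hkn : k ≤ n)
    (u : Fin n → EuclideanSpace ℝ (Fin d)) (hu : Function.Injective u)
    (α : Fin k → ℝ) (hα : StrictAnti α) (hαpos : ∀ i, 0 < α i)
    (σ : Fin k → Fin n) (hσ : Function.Injective σ)
    (hvert : (∑ i : Fin k, α i • u (σ i)) ∈
      Set.extremePoints ℝ (convexHull ℝ
        {x : EuclideanSpace ℝ (Fin d) |
          ∃ τ : Fin k → Fin n, Function.Injective τ ∧ x = ∑ i : Fin k, α i • u (τ i)})) :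
    ∃ c : EuclideanSpace ℝ (Fin d),
      (∀ i j : Fin k, i < j → ⟪c, u (σ j)⟫ < ⟪c, u (σ i)⟫) ∧
      (∀ j : Fin n, j ∉ Set.range σ →
        ⟪c, u j⟫ < ⟪c, u (σ ⟨k - 1, Nat.sub_lt hk Nat.one_pos⟩)⟫) := by
  classical
  set S : Set (EuclideanSpace ℝ (Fin d)) :=
    {x : EuclideanSpace ℝ (Fin d) |
      ∃ τ : Fin k → Fin n, Function.Injective τ ∧ x = ∑ i : Fin k, α i • u (τ i)} with hSdef
  set p : EuclideanSpace ℝ (Fin d) := ∑ i : Fin k, α i • u (σ i) with hp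
  -- S is finite
  have hSfin : S.Finite := by
    have : S = (fun τ : Fin k → Fin n => ∑ i : Fin k, α i • u (τ i)) ''
        {τ : Fin k → Fin n | Function.Injective τ} := by
      ext x
      constructor
      · rintro ⟨τ, hτ, rfl⟩; exact ⟨τ, hτ, rfl⟩
      · rintro ⟨τ, hτ, rfl⟩; exact ⟨τ, hτ, rfl⟩
    rw [this]
    exact (Set.toFinite _).image _
  -- extreme point is not in the hull of the rest
  have hnot : p ∉ convexHull ℝ (S \ {p}) := by
    have h1 := ((convex_convexHull ℝ S).mem_extremePoints_iff_mem_diff_convexHull_diff).1 hvert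
    intro hmem
    exact h1.2 (convexHull_mono (Set.diff_subset_diff_left (subset_convexHull ℝ S)) hmem)
  -- separate
  obtain ⟨f, t, hft, hfp⟩ := geometric_hahn_banach_closed_point
    (convex_convexHull ℝ _) ((hSfin.diff (t := {p})).isClosed_convexHull (𝕜 := ℝ)) hnot
  -- key consequence: f q < f p for any other vertex q
  have key : ∀ τ : Fin k → Fin n, Function.Injective τ →
      (∑ i : Fin k, α i • u (τ i)) ≠ p → f (∑ i : Fin k, α i • u (τ i)) < f p := by
    intro τ hτ hne
    have hqS : (∑ i : Fin k, α i • u (τ i)) ∈ S \ {p} := ⟨⟨τ, hτ, rfl⟩, hne⟩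
    exact lt_trans (hft _ (subset_convexHull ℝ _ hqS)) hfp
  set c : EuclideanSpace ℝ (Fin d) :=
    (InnerProductSpace.toDual ℝ (EuclideanSpace ℝ (Fin d))).symm f with hc
  have hcf : ∀ x : EuclideanSpace ℝ (Fin d), ⟪c, x⟫ = f x := fun x =>
    InnerProductSpace.toDual_symm_apply
  refine ⟨c, ?_, ?_⟩
  · -- first claim
    intro i j hij
    rw [hcf, hcf]
    by_contra hcon
    have hle' : f (u (σ i)) ≤ f (u (σ j)) := le_of_not_gt hcon
    -- swap i and j
    set τ : Fin k → Fin n := σ ∘ Equiv.swap i j with hτdef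
    have hτinj : Function.Injective τ := hσ.comp (Equiv.swap i j).injective
    have hdiff : (∑ i' : Fin k, α i' • u (τ i')) - p
        = (α i - α j) • (u (σ j) - u (σ i)) := by
      rw [hp, ← Finset.sum_sub_distrib]
      rw [← Finset.sum_subset (Finset.subset_univ ({i, j} : Finset (Fin k)))]
      · rw [Finset.sum_pair hij.ne]
        have h1 : τ i = σ j := by simp [hτdef, Equiv.swap_apply_left]
        have h2 : τ j = σ i := by simp [hτdef, Equiv.swap_apply_right]
        rw [h1, h2]
        module
      · intro x _ hx
        simp only [Finset.mem_insert, Finset.mem_singleton, not_or] at hx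
        have hxx : Equiv.swap i j x = x := Equiv.swap_apply_of_ne_of_ne hx.1 hx.2
        simp [hτdef, hxx]
    have hαij : α j < α i := hα hij
    have huij : u (σ j) - u (σ i) ≠ 0 := by
      rw [sub_ne_zero]
      exact fun h => absurd (hσ (hu h)) hij.ne'
    have hne : (∑ i' : Fin k, α i' • u (τ i')) ≠ p := by
      rw [← sub_ne_zero, hdiff]
      exact smul_ne_zero (by linarith) huij
    have hlt := key τ hτinj hne
    have hfdiff : f (∑ i' : Fin k, α i' • u (τ i')) - f p
        = (α i - α j) * (f (u (σ j)) - f (u (σ i))) := by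
      rw [← map_sub, hdiff, map_smul, map_sub]
      rfl
    nlinarith
  · -- second claim
    intro j hj
    set l : Fin k := ⟨k - 1, Nat.sub_lt hk Nat.one_pos⟩ with hl
    rw [hcf, hcf]
    set τ : Fin k → Fin n := Function.update σ l j with hτdef
    have hτl : τ l = j := Function.update_self l j σ
    have hτinj : Function.Injective τ := by
      intro a b hab
      by_cases ha : a = l <;> by_cases hb : b = l
      · rw [ha, hb]
      · exfalso
        rw [ha, hτl, hτdef, Function.update_of_ne hb] at hab
        exact hj ⟨b, hab.symm⟩
      · exfalso
        rw [hb, hτl, hτdef, Function.update_of_ne ha] at hab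
        exact hj ⟨a, hab⟩
      · rw [hτdef, Function.update_of_ne ha, Function.update_of_ne hb] at hab
        exact hσ hab
    have hdiff : (∑ i' : Fin k, α i' • u (τ i')) - p
        = α l • (u j - u (σ l)) := by
      rw [hp, ← Finset.sum_sub_distrib]
      rw [← Finset.sum_subset (Finset.subset_univ ({l} : Finset (Fin k)))]
      · rw [Finset.sum_singleton, hτl]
        module
      · intro x _ hx
        simp only [Finset.mem_singleton] at hx
        rw [hτdef, Function.update_of_ne hx]
        simp
    have hjl : j ≠ σ l := fun h => hj ⟨l, h.symm⟩
    have hujl : u j - u (σ l) ≠ 0 := by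
      rw [sub_ne_zero]
      exact fun h => hjl (hu h)
    have hne : (∑ i' : Fin k, α i' • u (τ i')) ≠ p := by
      rw [← sub_ne_zero, hdiff]
      exact smul_ne_zero (hαpos l).ne' hujl
    have hlt := key τ hτinj hne
    have hfdiff : f (∑ i' : Fin k, α i' • u (τ i')) - f p
        = α l * (f (u j) - f (u (σ l))) := by
      rw [← map_sub, hdiff, map_smul, map_sub]
      rfl
    have hαl := hαpos l
    nlinarith
end

section
/- Suppose the linear functional c satisfies the σ-ordering condition, i.e. ⟨c,u(σ 1)⟩ > ⟨c,u(σ 2)⟩ > ... > ⟨c,u(σ k)⟩ and ⟨c,u(σ k)⟩ > ⟨c,u j⟩ for every index j not in the range of σ. Then for every injective map γ : Fin k → Fin n with γ ≠ σ one has the strict inequality ⟨c, p_σ⟩ > ⟨c, p_γ⟩; in particular p_σ is the unique maximizer of c over the k-ordertope P_k. -/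
open scoped RealInnerProductSpace

open Finset in
/-- If the functional `c` satisfies the σ-ordering condition, then
`⟪c, p_σ⟫ > ⟪c, p_γ⟫` for every injective `γ ≠ σ`; in particular `p_σ` is the
unique maximizer of `c` over the `k`-ordertope `P_k`. -/
theorem ordering_implies_unique_maximizer
    (d n k : ℕ) (hd : 0 < d) (hn : 0 < n) (hk : 0 < k) (hkn : k ≤ n)
    (u : Fin n → EuclideanSpace ℝ (Fin d)) (hu : Function.Injective u)
    (α : Fin k → ℝ) (hα : StrictAnti α) (hαpos : ∀ i, 0 < α i)
    (σ : Fin k → Fin n) (hσ : Function.Injective σ)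
    (c : EuclideanSpace ℝ (Fin d))
    (hord : ∀ i j : Fin k, i < j → ⟪c, u (σ j)⟫ < ⟪c, u (σ i)⟫)
    (hout : ∀ j : Fin n, j ∉ Set.range σ →
      ⟪c, u j⟫ < ⟪c, u (σ ⟨k - 1, Nat.sub_lt hk Nat.one_pos⟩)⟫) :
    (∀ γ : Fin k → Fin n, Function.Injective γ → γ ≠ σ →
      ⟪c, (∑ i : Fin k, α i • u (γ i))⟫ < ⟪c, (∑ i : Fin k, α i • u (σ i))⟫) ∧
    (∀ x ∈ convexHull ℝ
        {x : EuclideanSpace ℝ (Fin d) |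
          ∃ τ : Fin k → Fin n, Function.Injective τ ∧ x = ∑ i : Fin k, α i • u (τ i)},
      x ≠ (∑ i : Fin k, α i • u (σ i)) →
        ⟪c, x⟫ < ⟪c, (∑ i : Fin k, α i • u (σ i))⟫) := by
  classical
  set f : Fin n → ℝ := fun j => ⟪c, u j⟫ with hfdef
  set L : Fin k := ⟨k - 1, Nat.sub_lt hk Nat.one_pos⟩ with hLdef
  have hσle : ∀ i j : Fin k, i ≤ j → f (σ j) ≤ f (σ i) := by
    intro i j h
    rcases eq_or_lt_of_le h with rfl | h
    · exact le_refl _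
    · exact (hord i j h).le
  have hLle : ∀ i : Fin k, f (σ L) ≤ f (σ i) := by
    intro i
    exact hσle i L (by simp [hLdef, Fin.le_def]; omega)
  have hother : ∀ t : Fin n, t ∉ Set.range σ → ∀ i : Fin k, f t < f (σ i) :=
    fun t ht i => lt_of_lt_of_le (hout t ht) (hLle i)
  -- inner product of a score sum
  have hip : ∀ τ : Fin k → Fin n,
      ⟪c, (∑ i : Fin k, α i • u (τ i))⟫ = ∑ i : Fin k, α i * f (τ i) := by
    intro τ
    rw [inner_sum]
    exact Finset.sum_congr rfl fun i _ => real_inner_smul_right c (u (τ i)) (α i)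
  -- the key combinatorial inequality
  have key : ∀ γ : Fin k → Fin n, Function.Injective γ → γ ≠ σ →
      (∑ i : Fin k, α i * f (γ i)) < ∑ i : Fin k, α i * f (σ i) := by
    intro γ hγ hne
    set P : ℕ → Finset (Fin k) := fun m => Finset.univ.filter (fun i => i.val < m) with hPdef
    -- prefix comparison
    have pre : ∀ m, 1 ≤ m → m ≤ k →
        ((∑ i ∈ P m, f (γ i)) ≤ ∑ i ∈ P m, f (σ i)) ∧
        ((P m).image γ ≠ (P m).image σ →
          (∑ i ∈ P m, f (γ i)) < ∑ i ∈ P m, f (σ i)) := by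
      intro m hm1 hmk
      set T := (P m).image γ with hTdef
      set S := (P m).image σ with hSdef
      have hsumT : ∑ t ∈ T, f t = ∑ i ∈ P m, f (γ i) :=
        Finset.sum_image (fun x _ y _ h => hγ h)
      have hsumS : ∑ t ∈ S, f t = ∑ i ∈ P m, f (σ i) :=
        Finset.sum_image (fun x _ y _ h => hσ h)
      have hcard : T.card = S.card := by
        rw [hTdef, hSdef, Finset.card_image_of_injective _ hγ,
          Finset.card_image_of_injective _ hσ]
      have hcard2 : (T \ S).card = (S \ T).card := Finset.card_sdiff_comm hcard
      set mi : Fin k := ⟨m - 1, by omega⟩ with hmidef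
      set b : ℝ := f (σ mi) with hbdef
      have hTb : ∀ t ∈ T \ S, f t < b := by
        intro t ht
        obtain ⟨htT, htS⟩ := Finset.mem_sdiff.mp ht
        by_cases hr : t ∈ Set.range σ
        · obtain ⟨i', rfl⟩ := hr
          have hi' : ¬ i'.val < m := by
            intro h
            exact htS (Finset.mem_image.mpr ⟨i', by simp [hPdef, h], rfl⟩)
          exact hord mi i' (by simp [hmidef, Fin.lt_def]; omega)
        · exact lt_of_lt_of_le (hout t hr) (hσle mi L (by simp [hmidef, hLdef, Fin.le_def]; omega))
      have hSb : ∀ s ∈ S \ T, b ≤ f s := by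
        intro s hs
        obtain ⟨i, hi, rfl⟩ := Finset.mem_image.mp (Finset.mem_sdiff.mp hs).1
        have hi' : i.val < m := by simpa [hPdef] using hi
        exact hσle i mi (by simp [hmidef, Fin.le_def]; omega)
      have hdiff : (∑ t ∈ T \ S, f t ≤ ∑ s ∈ S \ T, f s) ∧
          (T ≠ S → ∑ t ∈ T \ S, f t < ∑ s ∈ S \ T, f s) := by
        by_cases hTS : T \ S = ∅
        · have hTeq : T = S :=
            Finset.eq_of_subset_of_card_le (Finset.sdiff_eq_empty_iff_subset.mp hTS)
              (le_of_eq hcard.symm)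
          have hST : S \ T = ∅ := by rw [hTeq, Finset.sdiff_self]
          refine ⟨by rw [hTS, hST], fun h => absurd hTeq h⟩
        · have hne' : (T \ S).Nonempty := Finset.nonempty_iff_ne_empty.mpr hTS
          have hstrict : ∑ t ∈ T \ S, f t < ∑ s ∈ S \ T, f s := by
            calc ∑ t ∈ T \ S, f t < ∑ _t ∈ T \ S, b :=
                  Finset.sum_lt_sum_of_nonempty hne' hTb
              _ = (T \ S).card • b := by rw [Finset.sum_const]
              _ = (S \ T).card • b := by rw [hcard2]
              _ ≤ ∑ s ∈ S \ T, f s := Finset.card_nsmul_le_sum _ _ _ hSb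
          exact ⟨hstrict.le, fun _ => hstrict⟩
      have hsplit : (∑ i ∈ P m, f (σ i)) - (∑ i ∈ P m, f (γ i)) =
          (∑ s ∈ S \ T, f s) - ∑ t ∈ T \ S, f t := by
        rw [← hsumT, ← hsumS, Finset.sum_sdiff_sub_sum_sdiff]
      constructor
      · have := hdiff.1; linarith
      · intro h
        have hTS : T ≠ S := fun he => h (he ▸ rfl)
        have := hdiff.2 hTS; linarith
    -- extended sequences on ℕ
    set X : ℕ → ℝ := fun i => if h : i < k then f (σ ⟨i, h⟩) - f (γ ⟨i, h⟩) else 0 with hXdef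
    set a : ℕ → ℝ := fun i => if h : i < k then α ⟨i, h⟩ else 0 with hadef
    have hGP : ∀ m, m ≤ k → ∑ i ∈ Finset.range m, X i =
        (∑ i ∈ P m, f (σ i)) - (∑ i ∈ P m, f (γ i)) := by
      intro m hm
      rw [← Finset.sum_sub_distrib]
      refine Finset.sum_bij (fun i hi => (⟨i, lt_of_lt_of_le (Finset.mem_range.mp hi) hm⟩ : Fin k))
        ?_ ?_ ?_ ?_
      · intro i hi; simp [hPdef, Finset.mem_range.mp hi]
      · intro i hi j hj h
        simpa using congrArg Fin.val h
      · intro j hj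
        have : j.val < m := by simpa [hPdef] using hj
        exact ⟨j.val, Finset.mem_range.mpr this, by simp⟩
      · intro i hi
        simp [hXdef, lt_of_lt_of_le (Finset.mem_range.mp hi) hm]
    have hGnn : ∀ m, m ≤ k → 0 ≤ ∑ i ∈ Finset.range m, X i := by
      intro m hm
      rcases Nat.eq_zero_or_pos m with rfl | hm1
      · simp
      · rw [hGP m hm]
        have := (pre m hm1 hm).1
        linarith
    -- minimal disagreement index
    have hex : ∃ i, γ i ≠ σ i := by
      by_contra h
      push_neg at h
      exact hne (funext h)
    set s : Finset (Fin k) := Finset.univ.filter (fun i => γ i ≠ σ i) with hsdef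
    have hsne : s.Nonempty := by
      obtain ⟨i, hi⟩ := hex
      exact ⟨i, by simp [hsdef, hi]⟩
    set j0 : Fin k := s.min' hsne with hj0def
    have hj0 : γ j0 ≠ σ j0 := by
      have := s.min'_mem hsne
      simpa [hsdef] using this
    have hjlt : ∀ i : Fin k, i < j0 → γ i = σ i := by
      intro i hi
      by_contra h
      have : i ∈ s := by simp [hsdef, h]
      exact absurd (s.min'_le i this) (not_le.mpr hi)
    have himg : (P (j0.val + 1)).image γ ≠ (P (j0.val + 1)).image σ := by
      intro h
      have h1 : σ j0 ∈ (P (j0.val + 1)).image σ :=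
        Finset.mem_image.mpr ⟨j0, by simp [hPdef], rfl⟩
      rw [← h] at h1
      obtain ⟨i, hi, hieq⟩ := Finset.mem_image.mp h1
      have hi' : i.val < j0.val + 1 := by simpa [hPdef] using hi
      rcases eq_or_lt_of_le (show i ≤ j0 from Fin.le_def.mpr (by omega)) with rfl | hlt
      · exact hj0 hieq
      · have : γ i = σ i := hjlt i hlt
        rw [this] at hieq
        exact absurd (hσ hieq) (ne_of_lt hlt)
    have hGpos : 0 < ∑ i ∈ Finset.range (j0.val + 1), X i := by
      rw [hGP _ j0.isLt]
      have := (pre (j0.val + 1) (Nat.succ_le_succ (Nat.zero_le _)) j0.isLt).2 himg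
      linarith
    -- summation by parts
    have hD : 0 < ∑ i ∈ Finset.range k, a i • X i := by
      rw [Finset.sum_range_by_parts]
      have haL : 0 < a (k - 1) := by
        rw [hadef]
        simp only [dif_pos (Nat.sub_lt hk Nat.one_pos)]
        exact hαpos _
      have hterm : ∀ i ∈ Finset.range (k - 1), (a (i + 1) - a i) • (∑ j ∈ Finset.range (i + 1), X j) ≤ 0 := by
        intro i hi
        have hik : i < k - 1 := Finset.mem_range.mp hi
        have h1 : a (i + 1) - a i < 0 := by
          rw [hadef]
          simp only [dif_pos (show i + 1 < k by omega), dif_pos (show i < k by omega)]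
          have := hα (show (⟨i, by omega⟩ : Fin k) < ⟨i + 1, by omega⟩ by simp [Fin.lt_def])
          linarith
        have h2 : 0 ≤ ∑ j ∈ Finset.range (i + 1), X j := hGnn (i + 1) (by omega)
        exact mul_nonpos_iff.mpr (Or.inr ⟨h1.le, h2⟩)
      have hsum_nonpos : ∑ i ∈ Finset.range (k - 1), (a (i + 1) - a i) • (∑ j ∈ Finset.range (i + 1), X j) ≤ 0 :=
        Finset.sum_nonpos hterm
      have hfirst : 0 ≤ a (k - 1) • ∑ i ∈ Finset.range k, X i :=
        mul_nonneg haL.le (hGnn k le_rfl)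
      rcases eq_or_lt_of_le (show j0.val + 1 ≤ k from j0.isLt) with heq | hlt
      · -- j0 is the last index : first term is positive
        have hfirst' : 0 < a (k - 1) • ∑ i ∈ Finset.range k, X i := by
          apply mul_pos haL
          rw [← heq]; exact hGpos
        simp only [smul_eq_mul] at *
        linarith
      · -- strict term inside the sum
        have hj0r : j0.val ∈ Finset.range (k - 1) := Finset.mem_range.mpr (by omega)
        have hstrict : (a (j0.val + 1) - a j0.val) • (∑ j ∈ Finset.range (j0.val + 1), X j) < 0 := by
          apply mul_neg_of_neg_of_pos _ hGpos
          rw [hadef]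
          simp only [dif_pos (show j0.val + 1 < k by omega), dif_pos j0.isLt]
          have := hα (show (⟨j0.val, j0.isLt⟩ : Fin k) < ⟨j0.val + 1, by omega⟩ by simp [Fin.lt_def])
          linarith
        have hsum_neg : ∑ i ∈ Finset.range (k - 1), (a (i + 1) - a i) • (∑ j ∈ Finset.range (i + 1), X j) < 0 := by
          calc ∑ i ∈ Finset.range (k - 1), (a (i + 1) - a i) • (∑ j ∈ Finset.range (i + 1), X j)
              < ∑ _i ∈ Finset.range (k - 1), (0 : ℝ) :=
                Finset.sum_lt_sum hterm ⟨j0.val, hj0r, hstrict⟩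
            _ = 0 := by simp
        simp only [smul_eq_mul] at *
        linarith
    have hDfin : ∑ i ∈ Finset.range k, a i • X i =
        ∑ i : Fin k, α i * (f (σ i) - f (γ i)) := by
      rw [← Fin.sum_univ_eq_sum_range (fun i => a i • X i) k]
      refine Finset.sum_congr rfl fun i _ => ?_
      simp [hadef, hXdef, i.isLt, smul_eq_mul]
    rw [hDfin] at hD
    have hexp : ∑ i : Fin k, α i * (f (σ i) - f (γ i)) =
        (∑ i : Fin k, α i * f (σ i)) - ∑ i : Fin k, α i * f (γ i) := by
      rw [← Finset.sum_sub_distrib]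
      exact Finset.sum_congr rfl fun i _ => by ring
    rw [hexp] at hD
    linarith
  have key' : ∀ γ : Fin k → Fin n, Function.Injective γ → γ ≠ σ →
      ⟪c, (∑ i : Fin k, α i • u (γ i))⟫ < ⟪c, (∑ i : Fin k, α i • u (σ i))⟫ := by
    intro γ hγ hne
    rw [hip γ, hip σ]
    exact key γ hγ hne
  refine ⟨key', ?_⟩
  intro x hx hxne
  set M : EuclideanSpace ℝ (Fin d) := ∑ i : Fin k, α i • u (σ i) with hMdef
  set F : Set (EuclideanSpace ℝ (Fin d)) := {y | ⟪c, y⟫ < ⟪c, M⟫ ∨ y = M} with hFdef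
  have hFconv : Convex ℝ F := by
    intro y hy z hz p q hp hq hpq
    have hval : ⟪c, p • y + q • z⟫ = p * ⟪c, y⟫ + q * ⟪c, z⟫ := by
      rw [inner_add_right, real_inner_smul_right, real_inner_smul_right]
    have hyle : ⟪c, y⟫ ≤ ⟪c, M⟫ := by
      rcases hy with h | h
      · exact h.le
      · rw [h]
    have hzle : ⟪c, z⟫ ≤ ⟪c, M⟫ := by
      rcases hz with h | h
      · exact h.le
      · rw [h]
    rcases eq_or_lt_of_le hp with hp0 | hp0
    · have hq1 : q = 1 := by linarith
      have : p • y + q • z = z := by rw [← hp0, hq1]; simp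
      rw [this]; exact hz
    rcases eq_or_lt_of_le hq with hq0 | hq0
    · have hp1 : p = 1 := by linarith
      have : p • y + q • z = y := by rw [← hq0, hp1]; simp
      rw [this]; exact hy
    rcases hy with hylt | hyM
    · left
      show ⟪c, p • y + q • z⟫ < ⟪c, M⟫
      rw [hval]
      have e1 : p * ⟪c, y⟫ < p * ⟪c, M⟫ := mul_lt_mul_of_pos_left hylt hp0
      have e2 : q * ⟪c, z⟫ ≤ q * ⟪c, M⟫ := mul_le_mul_of_nonneg_left hzle hq
      have e3 : p * ⟪c, M⟫ + q * ⟪c, M⟫ = ⟪c, M⟫ := by rw [← add_mul, hpq, one_mul]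
      linarith
    rcases hz with hzlt | hzM
    · left
      show ⟪c, p • y + q • z⟫ < ⟪c, M⟫
      rw [hval]
      have e1 : q * ⟪c, z⟫ < q * ⟪c, M⟫ := mul_lt_mul_of_pos_left hzlt hq0
      have e2 : p * ⟪c, y⟫ ≤ p * ⟪c, M⟫ := mul_le_mul_of_nonneg_left hyle hp
      have e3 : p * ⟪c, M⟫ + q * ⟪c, M⟫ = ⟪c, M⟫ := by rw [← add_mul, hpq, one_mul]
      linarith
    · right
      show p • y + q • z = M
      rw [hyM, hzM, ← add_smul, hpq, one_smul]
  have hVF : {x : EuclideanSpace ℝ (Fin d) |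
      ∃ τ : Fin k → Fin n, Function.Injective τ ∧ x = ∑ i : Fin k, α i • u (τ i)} ⊆ F := by
    rintro v ⟨τ, hτ, rfl⟩
    by_cases hτσ : τ = σ
    · right
      rw [hτσ]
    · left
      exact key' τ hτ hτσ
  have hxF : x ∈ F := convexHull_min hVF hFconv hx
  rcases hxF with h | h
  · exact h
  · exact absurd h hxne
end

section
/- For a linear functional c and an injective map σ : Fin k → Fin n, the following are equivalent: (1) ⟨c, p_σ⟩ > ⟨c, p_γ⟩ for every injective γ : Fin k → Fin n with γ ≠ σ (i.e. c lies in the relative interior of the normal cone of the vertex p_σ of P_k); (2) c satisfies the σ-ordering condition, i.e. ⟨c,u(σ 1)⟩ > ⟨c,u(σ 2)⟩ > ... > ⟨c,u(σ k)⟩ and ⟨c,u(σ k)⟩ > ⟨c,u j⟩ for every index j not in the range of σ. -/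
open scoped RealInnerProductSpace

lemma ordertope_abel_aux (A F : ℕ → ℝ) (N : ℕ) :
    ∑ m ∈ Finset.range N, (A m - A (m+1)) * (∑ i ∈ Finset.range (m+1), F i) =
      (∑ i ∈ Finset.range N, A i * F i) - A N * ∑ i ∈ Finset.range N, F i := by
  induction N with
  | zero => simp
  | succ N ih =>
      rw [Finset.sum_range_succ, ih, Finset.sum_range_succ (fun i => A i * F i),
        Finset.sum_range_succ F]
      ring

lemma ordertope_core {ι : Type*} [DecidableEq ι] (s t : Finset ι) (f : ι → ℝ) (b : ℝ)
    (hcard : s.card = t.card) (hs : ∀ x ∈ s \ t, f x ≤ b) (ht : ∀ x ∈ t \ s, b ≤ f x) :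
    ∑ x ∈ s, f x ≤ ∑ x ∈ t, f x := by
  have h1 : ∑ x ∈ s ∩ t, f x + ∑ x ∈ s \ t, f x = ∑ x ∈ s, f x :=
    Finset.sum_inter_add_sum_sdiff s t f
  have h2 : ∑ x ∈ t ∩ s, f x + ∑ x ∈ t \ s, f x = ∑ x ∈ t, f x :=
    Finset.sum_inter_add_sum_sdiff t s f
  have hc : (s \ t).card = (t \ s).card := Finset.card_sdiff_comm hcard
  have h3 : ∑ x ∈ s \ t, f x ≤ (s \ t).card • b := Finset.sum_le_card_nsmul _ _ _ hs
  have h4 : (t \ s).card • b ≤ ∑ x ∈ t \ s, f x := Finset.card_nsmul_le_sum _ _ _ ht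
  rw [Finset.inter_comm] at h2
  rw [hc] at h3
  linarith

/-- The functional `c` lies in the relative interior of the normal cone of the
vertex `p_σ` of the `k`-ordertope (i.e. `⟪c, p_σ⟫ > ⟪c, p_γ⟫` for all injective
`γ ≠ σ`) if and only if `c` satisfies the σ-ordering condition. -/
theorem normal_cone_interior_iff_ordering
    (d n k : ℕ) (hd : 0 < d) (hn : 0 < n) (hk : 0 < k) (hkn : k ≤ n)
    (u : Fin n → EuclideanSpace ℝ (Fin d)) (hu : Function.Injective u)
    (α : Fin k → ℝ) (hα : StrictAnti α) (hαpos : ∀ i, 0 < α i)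
    (σ : Fin k → Fin n) (hσ : Function.Injective σ)
    (c : EuclideanSpace ℝ (Fin d)) :
    (∀ γ : Fin k → Fin n, Function.Injective γ → γ ≠ σ →
      ⟪c, (∑ i : Fin k, α i • u (γ i))⟫ < ⟪c, (∑ i : Fin k, α i • u (σ i))⟫) ↔
    ((∀ i j : Fin k, i < j → ⟪c, u (σ j)⟫ < ⟪c, u (σ i)⟫) ∧
      (∀ j : Fin n, j ∉ Set.range σ →
        ⟪c, u j⟫ < ⟪c, u (σ ⟨k - 1, Nat.sub_lt hk Nat.one_pos⟩)⟫)) := by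
  set f : Fin n → ℝ := fun j => ⟪c, u j⟫ with hf
  have hsum : ∀ τ : Fin k → Fin n,
      ⟪c, (∑ i : Fin k, α i • u (τ i))⟫ = ∑ i : Fin k, α i * f (τ i) := by
    intro τ
    rw [inner_sum]
    exact Finset.sum_congr rfl fun i _ => real_inner_smul_right c (u (τ i)) (α i)
  simp only [hsum]
  set last : Fin k := ⟨k - 1, Nat.sub_lt hk Nat.one_pos⟩ with hlast
  constructor
  · intro H
    constructor
    · intro i j hij
      have hij' : i ≠ j := ne_of_lt hij
      have hne : σ ∘ Equiv.swap i j ≠ σ := by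
        intro hcon
        have h1 := congrFun hcon i
        simp only [Function.comp_apply, Equiv.swap_apply_left] at h1
        exact hij' (hσ h1).symm
      have h := H (σ ∘ Equiv.swap i j) (hσ.comp (Equiv.swap i j).injective) hne
      have hdiff : 0 < ∑ x : Fin k, α x * (f (σ x) - f (σ (Equiv.swap i j x))) := by
        have := sub_pos.mpr h
        calc (0:ℝ) < ∑ x : Fin k, α x * f (σ x) - ∑ x : Fin k, α x * f ((σ ∘ Equiv.swap i j) x) := this
        _ = ∑ x : Fin k, α x * (f (σ x) - f (σ (Equiv.swap i j x))) := by
            rw [← Finset.sum_sub_distrib]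
            exact Finset.sum_congr rfl fun x _ => by simp [mul_sub]
      have hsupp : ∀ x ∈ (Finset.univ : Finset (Fin k)), x ∉ ({i, j} : Finset (Fin k)) →
          α x * (f (σ x) - f (σ (Equiv.swap i j x))) = 0 := by
        intro x _ hx
        simp only [Finset.mem_insert, Finset.mem_singleton] at hx
        push_neg at hx
        rw [Equiv.swap_apply_of_ne_of_ne hx.1 hx.2]
        simp
      have heq := Finset.sum_subset (Finset.subset_univ ({i, j} : Finset (Fin k))) hsupp
      rw [← heq, Finset.sum_pair hij'] at hdiff
      rw [Equiv.swap_apply_left, Equiv.swap_apply_right] at hdiff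
      have hα' : 0 < α i - α j := sub_pos.mpr (hα hij)
      nlinarith [hdiff, hα']
    · intro j hj
      set γ : Fin k → Fin n := fun x => if x = last then j else σ x with hγ
      have hγinj : Function.Injective γ := by
        intro a b hab
        simp only [hγ] at hab
        by_cases ha : a = last <;> by_cases hb : b = last
        · rw [ha, hb]
        · rw [if_pos ha, if_neg hb] at hab
          exact absurd ⟨b, hab.symm⟩ hj
        · rw [if_neg ha, if_pos hb] at hab
          exact absurd ⟨a, hab⟩ hj
        · rw [if_neg ha, if_neg hb] at hab
          exact hσ hab
      have hγne : γ ≠ σ := by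
        intro hcon
        have := congrFun hcon last
        simp only [hγ, if_pos rfl] at this
        exact hj ⟨last, this.symm⟩
      have h := H γ hγinj hγne
      have hdiff : 0 < ∑ x : Fin k, α x * (f (σ x) - f (γ x)) := by
        have := sub_pos.mpr h
        calc (0:ℝ) < ∑ x : Fin k, α x * f (σ x) - ∑ x : Fin k, α x * f (γ x) := this
        _ = ∑ x : Fin k, α x * (f (σ x) - f (γ x)) := by
            rw [← Finset.sum_sub_distrib]
            exact Finset.sum_congr rfl fun x _ => by simp [mul_sub]
      rw [Finset.sum_eq_single last
        (by intro b _ hb; simp [hγ, hb])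
        (by intro hl; exact absurd (Finset.mem_univ last) hl)] at hdiff
      simp only [hγ, if_pos rfl] at hdiff
      nlinarith [hαpos last, hdiff]
  · rintro ⟨hdec, hout⟩ γ hγinj hγne
    have hlast_le : ∀ i : Fin k, f (σ last) ≤ f (σ i) := by
      intro i
      have hle : i ≤ last := by
        rw [hlast, Fin.le_def]
        show i.val ≤ k - 1
        omega
      rcases eq_or_lt_of_le hle with h | h
      · rw [h]
      · exact le_of_lt (hdec i last h)
    have htop : ∀ (i : Fin k) (t : Fin n), (∀ i' : Fin k, i' ≤ i → t ≠ σ i') →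
        f t < f (σ i) := by
      intro i t ht
      by_cases hr : t ∈ Set.range σ
      · obtain ⟨j, rfl⟩ := hr
        have hij : i < j := by
          by_contra hc
          push_neg at hc
          exact ht j hc rfl
        exact hdec i j hij
      · exact lt_of_lt_of_le (hout t hr) (hlast_le i)
    set F : (Fin k → Fin n) → ℕ → ℝ :=
      fun τ i => if h : i < k then f (τ ⟨i, h⟩) else 0 with hF
    have hpartial : ∀ (τ : Fin k → Fin n), Function.Injective τ → ∀ m, m < k →
        ∑ i ∈ Finset.range (m+1), F τ i =
          ∑ x ∈ Finset.image τ (Finset.univ.filter (fun i : Fin k => i.val ≤ m)), f x := by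
      intro τ hτ m hm
      rw [Finset.sum_image (fun a _ b _ hab => hτ hab)]
      have h1 : Finset.range (m+1) = (Finset.range k).filter (fun i => i ≤ m) := by
        ext x; simp; omega
      rw [h1, Finset.sum_filter,
        ← Fin.sum_univ_eq_sum_range (fun i => if i ≤ m then F τ i else 0) k,
        Finset.sum_filter]
      refine Finset.sum_congr rfl fun x _ => ?_
      by_cases hx : x.val ≤ m
      · simp [hF, hx, x.isLt]
      · simp [hx]
    have hS_le : ∀ m, m < k →
        ∑ i ∈ Finset.range (m+1), F γ i ≤ ∑ i ∈ Finset.range (m+1), F σ i := by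
      intro m hm
      rw [hpartial γ hγinj m hm, hpartial σ hσ m hm]
      refine ordertope_core _ _ f (f (σ ⟨m, hm⟩)) ?_ ?_ ?_
      · rw [Finset.card_image_of_injective _ hγinj, Finset.card_image_of_injective _ hσ]
      · intro x hx
        simp only [Finset.mem_sdiff, Finset.mem_image, Finset.mem_filter,
          Finset.mem_univ, true_and] at hx
        obtain ⟨⟨i, hi, rfl⟩, hnx⟩ := hx
        refine le_of_lt (htop ⟨m, hm⟩ _ ?_)
        intro i' hi' hcon
        exact hnx ⟨i', by rw [Fin.le_def] at hi'; exact hi', hcon.symm⟩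
      · intro x hx
        simp only [Finset.mem_sdiff, Finset.mem_image, Finset.mem_filter,
          Finset.mem_univ, true_and] at hx
        obtain ⟨⟨i, hi, rfl⟩, _⟩ := hx
        have hle : i ≤ (⟨m, hm⟩ : Fin k) := by rw [Fin.le_def]; exact hi
        rcases eq_or_lt_of_le hle with h | h
        · rw [h]
        · exact le_of_lt (hdec i ⟨m, hm⟩ h)
    have hex : ∃ m : ℕ, ∃ h : m < k, γ ⟨m, h⟩ ≠ σ ⟨m, h⟩ := by
      by_contra hc
      push_neg at hc
      exact hγne (funext fun i => by have := hc i.val i.isLt; simpa using this)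
    set i0 := Nat.find hex with hi0
    obtain ⟨hi0k, hi0ne⟩ := Nat.find_spec hex
    have hi0min : ∀ m, m < i0 → ∀ h : m < k, γ ⟨m, h⟩ = σ ⟨m, h⟩ := by
      intro m hm h
      have := Nat.find_min hex hm
      push_neg at this
      exact this h
    have hS_lt : ∑ i ∈ Finset.range (i0+1), F γ i < ∑ i ∈ Finset.range (i0+1), F σ i := by
      rw [Finset.sum_range_succ, Finset.sum_range_succ]
      have h1 : ∑ i ∈ Finset.range i0, F γ i = ∑ i ∈ Finset.range i0, F σ i := by
        refine Finset.sum_congr rfl fun i hi => ?_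
        rw [Finset.mem_range] at hi
        have hik : i < k := lt_trans hi hi0k
        simp [hF, hik, hi0min i hi hik]
      rw [h1]
      have h2 : F γ i0 < F σ i0 := by
        simp only [hF, dif_pos hi0k]
        rw [dif_pos hi0k, dif_pos hi0k]
        refine htop ⟨i0, hi0k⟩ _ ?_
        intro i' hi' hcon
        rcases eq_or_lt_of_le hi' with h | h
        · exact hi0ne (by rw [← h] at hcon ⊢; exact hcon)
        · have hlt : i'.val < i0 := by rw [Fin.lt_def] at h; exact h
          have heqi : γ ⟨i'.val, i'.isLt⟩ = σ ⟨i'.val, i'.isLt⟩ := hi0min i'.val hlt i'.isLt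
          have : γ ⟨i0, hi0k⟩ = γ i' := by
            rw [hcon]
            rw [show (⟨i'.val, i'.isLt⟩ : Fin k) = i' from Fin.eta i' i'.isLt] at heqi
            exact heqi.symm
          have hv : i'.val = i0 := by rw [← hγinj this]
          omega
      linarith
    set A : ℕ → ℝ := fun i => if h : i < k then α ⟨i, h⟩ else 0 with hA
    have hAk : A k = 0 := dif_neg (lt_irrefl k)
    have hmain : ∀ τ : Fin k → Fin n,
        ∑ i : Fin k, α i * f (τ i) =
          ∑ m ∈ Finset.range k, (A m - A (m+1)) * ∑ i ∈ Finset.range (m+1), F τ i := by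
      intro τ
      rw [ordertope_abel_aux A (F τ) k, hAk, zero_mul, sub_zero,
        ← Fin.sum_univ_eq_sum_range (fun i => A i * F τ i) k]
      exact Finset.sum_congr rfl fun x _ => by simp [hA, hF, x.isLt]
    rw [hmain γ, hmain σ]
    have hcoef : ∀ m, m < k → 0 < A m - A (m+1) := by
      intro m hm
      simp only [hA, dif_pos hm]
      by_cases h : m + 1 < k
      · rw [dif_pos h]
        have := hα (show (⟨m, hm⟩ : Fin k) < ⟨m+1, h⟩ from Fin.mk_lt_mk.mpr (Nat.lt_succ_self m))
        linarith
      · rw [dif_neg h]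
        have := hαpos ⟨m, hm⟩
        linarith
    refine Finset.sum_lt_sum (fun m hm => ?_) ⟨i0, Finset.mem_range.mpr hi0k, ?_⟩
    · rw [Finset.mem_range] at hm
      exact mul_le_mul_of_nonneg_left (hS_le m hm) (le_of_lt (hcoef m hm))
    · exact mul_lt_mul_of_pos_left hS_lt (hcoef i0 hi0k)
end

section
/- The normal fan of the k-ordertope is independent of the choice of the decreasing positive weights: if α, β : Fin k → ℝ are two strictly decreasing families of positive weights, writing p_σ^α = Σ_{i=1}^k α_i u(σ i) and p_σ^β = Σ_{i=1}^k β_i u(σ i), then for every functional c and every injective σ : Fin k → Fin n, one has ⟨c, p_σ^α⟩ > ⟨c, p_γ^α⟩ for all injective γ ≠ σ if and only if ⟨c, p_σ^β⟩ > ⟨c, p_γ^β⟩ for all injective γ ≠ σ. -/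
open scoped RealInnerProductSpace
open Finset

private lemma sum_all_lt' {m : ℕ} (f : Fin m → ℝ) (s t : Finset (Fin m))
    (hcard : s.card = t.card) (h : ∀ a ∈ s, ∀ b ∈ t, f a < f b) :
    (∑ a ∈ s, f a ≤ ∑ b ∈ t, f b) ∧ (s.Nonempty → ∑ a ∈ s, f a < ∑ b ∈ t, f b) := by
  rcases s.eq_empty_or_nonempty with hs | hs
  · subst hs
    have : t = ∅ := by
      have := hcard.symm
      simpa [Finset.card_eq_zero] using this
    subst this
    simp
  · have ht : t.Nonempty := by
      rw [← Finset.card_pos, ← hcard, Finset.card_pos]; exact hs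
    obtain ⟨b0, hb0t, hb0⟩ := t.exists_min_image f ht
    have h1 : ∑ a ∈ s, f a < ∑ _a ∈ s, f b0 :=
      Finset.sum_lt_sum_of_nonempty hs (fun a ha => h a ha b0 hb0t)
    have h2 : ∑ _b ∈ t, f b0 ≤ ∑ b ∈ t, f b :=
      Finset.sum_le_sum (fun b hb => hb0 b hb)
    have h3 : ∑ _a ∈ s, f b0 = ∑ _b ∈ t, f b0 := by
      simp [Finset.sum_const, hcard]
    have : ∑ a ∈ s, f a < ∑ b ∈ t, f b := by
      calc ∑ a ∈ s, f a < ∑ _a ∈ s, f b0 := h1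
        _ = ∑ _b ∈ t, f b0 := h3
        _ ≤ ∑ b ∈ t, f b := h2
    exact ⟨this.le, fun _ => this⟩

private lemma abel_key (W z : ℕ → ℝ) (k : ℕ) :
    ∑ i ∈ Finset.range (k+1), W i * z i
      = (∑ i ∈ Finset.range k, (W i - W k) * z i) + W k * ∑ i ∈ Finset.range (k+1), z i := by
  rw [Finset.sum_range_succ z, mul_add, Finset.mul_sum, Finset.sum_range_succ (fun i => W i * z i),
    ← add_assoc, ← Finset.sum_add_distrib]
  congr 1
  exact Finset.sum_congr rfl fun i _ => by ring

private lemma weighted_le (x y : ℕ → ℝ) :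
    ∀ (k : ℕ) (W : ℕ → ℝ), (∀ i j, i ≤ j → j < k → W j ≤ W i) → (∀ i, i < k → 0 ≤ W i) →
    (∀ m, m ≤ k → ∑ i ∈ Finset.range m, x i ≤ ∑ i ∈ Finset.range m, y i) →
    ∑ i ∈ Finset.range k, W i * x i ≤ ∑ i ∈ Finset.range k, W i * y i := by
  intro k
  induction k with
  | zero => simp
  | succ k ih =>
    intro W hanti hpos hps
    rw [abel_key W x k, abel_key W y k]
    refine add_le_add ?_ ?_
    · refine ih (fun i => W i - W k) (fun i j hij hjk => ?_) (fun i hi => ?_)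
        (fun m hm => hps m (hm.trans (Nat.le_succ k)))
      · exact sub_le_sub_right (hanti i j hij (hjk.trans (Nat.lt_succ_self k))) _
      · exact sub_nonneg.2 (hanti i k hi.le (Nat.lt_succ_self k))
    · exact mul_le_mul_of_nonneg_left (hps (k+1) le_rfl) (hpos k (Nat.lt_succ_self k))

private lemma weighted_lt (x y : ℕ → ℝ) :
    ∀ (k : ℕ) (W : ℕ → ℝ), (∀ i j, i < j → j < k → W j < W i) → (∀ i, i < k → 0 < W i) →
    (∀ m, m ≤ k → ∑ i ∈ Finset.range m, x i ≤ ∑ i ∈ Finset.range m, y i) →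
    (∃ m0, 0 < m0 ∧ m0 ≤ k ∧ ∑ i ∈ Finset.range m0, x i < ∑ i ∈ Finset.range m0, y i) →
    ∑ i ∈ Finset.range k, W i * x i < ∑ i ∈ Finset.range k, W i * y i := by
  intro k
  induction k with
  | zero => rintro W _ _ _ ⟨m0, hm0, hm0k, _⟩; omega
  | succ k ih =>
    rintro W hanti hpos hps ⟨m0, hm0, hm0k, hstrict⟩
    have hanti' : ∀ i j, i ≤ j → j < k + 1 → W j ≤ W i := by
      intro i j hij hjk
      rcases eq_or_lt_of_le hij with rfl | h
      · exact le_rfl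
      · exact (hanti i j h hjk).le
    rw [abel_key W x k, abel_key W y k]
    rcases eq_or_lt_of_le hm0k with rfl | hlt
    · refine add_lt_add_of_le_of_lt ?_ ?_
      · refine weighted_le x y k (fun i => W i - W k) (fun i j hij hjk => ?_) (fun i hi => ?_)
          (fun m hm => hps m (hm.trans (Nat.le_succ k)))
        · exact sub_le_sub_right (hanti' i j hij (hjk.trans (Nat.lt_succ_self k))) _
        · exact sub_nonneg.2 (hanti' i k hi.le (Nat.lt_succ_self k))
      · exact mul_lt_mul_of_pos_left hstrict (hpos k (Nat.lt_succ_self k))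
    · have hm0k' : m0 ≤ k := Nat.lt_succ_iff.1 hlt
      refine add_lt_add_of_lt_of_le ?_ ?_
      · refine ih (fun i => W i - W k) (fun i j hij hjk => ?_) (fun i hi => ?_)
          (fun m hm => hps m (hm.trans (Nat.le_succ k))) ⟨m0, hm0, hm0k', hstrict⟩
        · exact sub_lt_sub_right (hanti i j hij (hjk.trans (Nat.lt_succ_self k))) _
        · exact sub_pos.2 (hanti i k hi (Nat.lt_succ_self k))
      · exact mul_le_mul_of_nonneg_left (hps (k+1) le_rfl) (hpos k (Nat.lt_succ_self k)).le

private lemma top_lemma (n k : ℕ) (f : Fin n → ℝ) (σ γ : Fin k → Fin n)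
    (hσ : Function.Injective σ) (hγ : Function.Injective γ)
    (h1 : ∀ i j : Fin k, i < j → f (σ j) < f (σ i))
    (h2 : ∀ a, a ∉ Set.range σ → ∀ i, f a < f (σ i))
    (m : ℕ) :
    (∑ i ∈ Finset.univ.filter (fun i : Fin k => i.val < m), f (γ i)
      ≤ ∑ i ∈ Finset.univ.filter (fun i : Fin k => i.val < m), f (σ i))
    ∧ ((Finset.univ.filter (fun i : Fin k => i.val < m)).image γ ≠
        (Finset.univ.filter (fun i : Fin k => i.val < m)).image σ →
      ∑ i ∈ Finset.univ.filter (fun i : Fin k => i.val < m), f (γ i)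
        < ∑ i ∈ Finset.univ.filter (fun i : Fin k => i.val < m), f (σ i)) := by
  set I := Finset.univ.filter (fun i : Fin k => i.val < m) with hI
  set A := I.image γ with hA
  set B := I.image σ with hB
  have hsumA : ∑ i ∈ I, f (γ i) = ∑ a ∈ A, f a :=
    (Finset.sum_image (fun a _ b _ hab => hγ hab)).symm
  have hsumB : ∑ i ∈ I, f (σ i) = ∑ b ∈ B, f b :=
    (Finset.sum_image (fun a _ b _ hab => hσ hab)).symm
  have hcardA : A.card = I.card := Finset.card_image_of_injective I hγ
  have hcardB : B.card = I.card := Finset.card_image_of_injective I hσ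
  have hcard : (A \ B).card = (B \ A).card := by
    have h1' := Finset.card_inter_add_card_sdiff A B
    have h2' := Finset.card_inter_add_card_sdiff B A
    rw [Finset.inter_comm B A] at h2'
    omega
  have hpt : ∀ a ∈ A \ B, ∀ b ∈ B \ A, f a < f b := by
    intro a ha b hb
    obtain ⟨haA, haB⟩ := Finset.mem_sdiff.1 ha
    obtain ⟨hbB, _⟩ := Finset.mem_sdiff.1 hb
    obtain ⟨i, hiI, rfl⟩ := Finset.mem_image.1 hbB
    by_cases hr : a ∈ Set.range σ
    · obtain ⟨l, rfl⟩ := hr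
      have hlI : l ∉ I := fun hlI => haB (Finset.mem_image.2 ⟨l, hlI, rfl⟩)
      have : i < l := by
        simp only [hI, Finset.mem_filter, Finset.mem_univ, true_and] at hiI hlI
        exact Fin.lt_def.2 (by omega)
      exact h1 i l this
    · exact h2 a hr i
  obtain ⟨hle, hlt⟩ := sum_all_lt' f (A \ B) (B \ A) hcard hpt
  have hdecomp : ∀ (s t : Finset (Fin n)),
      ∑ a ∈ s, f a = ∑ a ∈ s ∩ t, f a + ∑ a ∈ s \ t, f a := by
    intro s t
    exact (Finset.sum_inter_add_sum_sdiff s t f).symm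
  have hAB : ∑ a ∈ A, f a = ∑ a ∈ A ∩ B, f a + ∑ a ∈ A \ B, f a := hdecomp A B
  have hBA : ∑ b ∈ B, f b = ∑ a ∈ A ∩ B, f a + ∑ b ∈ B \ A, f b := by
    rw [hdecomp B A, Finset.inter_comm]
  constructor
  · rw [hsumA, hsumB, hAB, hBA]
    linarith
  · intro hne
    have hnonempty : (A \ B).Nonempty := by
      rw [Finset.sdiff_nonempty]
      intro hsub
      exact hne (Finset.eq_of_subset_of_card_le hsub (by omega))
    rw [hsumA, hsumB, hAB, hBA]
    linarith [hlt hnonempty]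

private lemma bridge (k : ℕ) (g : Fin k → ℝ) (m : ℕ) (hm : m ≤ k) :
    ∑ i ∈ Finset.range m, (if h : i < k then g ⟨i, h⟩ else 0)
      = ∑ i ∈ Finset.univ.filter (fun i : Fin k => i.val < m), g i := by
  have e1 : (Finset.range k).filter (· < m) = Finset.range m := by
    ext i
    simp only [Finset.mem_filter, Finset.mem_range]
    omega
  rw [Finset.sum_filter]
  symm
  calc ∑ i : Fin k, (if (i : ℕ) < m then g i else 0)
      = ∑ i ∈ Finset.range k, (if i < m then (if h : i < k then g ⟨i, h⟩ else 0) else 0) := by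
        rw [← Fin.sum_univ_eq_sum_range
          (fun i => if i < m then (if h : i < k then g ⟨i, h⟩ else 0) else 0) k]
        refine Finset.sum_congr rfl fun i _ => ?_
        by_cases h : (i : ℕ) < m <;> simp [h, i.isLt]
    _ = ∑ i ∈ (Finset.range k).filter (· < m), (if h : i < k then g ⟨i, h⟩ else 0) := by
        rw [Finset.sum_filter]
    _ = ∑ i ∈ Finset.range m, (if h : i < k then g ⟨i, h⟩ else 0) := by rw [e1]

private lemma bwd (n k : ℕ) (f : Fin n → ℝ) (w : Fin k → ℝ)
    (hw : StrictAnti w) (hwpos : ∀ i, 0 < w i)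
    (σ : Fin k → Fin n) (hσ : Function.Injective σ)
    (h1 : ∀ i j : Fin k, i < j → f (σ j) < f (σ i))
    (h2 : ∀ a, a ∉ Set.range σ → ∀ i, f a < f (σ i))
    (γ : Fin k → Fin n) (hγ : Function.Injective γ) (hne : γ ≠ σ) :
    ∑ i : Fin k, w i * f (γ i) < ∑ i : Fin k, w i * f (σ i) := by
  classical
  -- minimal index of disagreement
  have hsne : (Finset.univ.filter (fun i : Fin k => γ i ≠ σ i)).Nonempty := by
    obtain ⟨a, ha⟩ := Function.ne_iff.1 hne
    exact ⟨a, Finset.mem_filter.2 ⟨Finset.mem_univ a, ha⟩⟩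
  set i0 := (Finset.univ.filter (fun i : Fin k => γ i ≠ σ i)).min' hsne with hi0
  have hi0ne : γ i0 ≠ σ i0 := by
    have := Finset.min'_mem (Finset.univ.filter (fun i : Fin k => γ i ≠ σ i)) hsne
    exact (Finset.mem_filter.1 this).2
  have hi0min : ∀ j : Fin k, j < i0 → γ j = σ j := by
    intro j hj
    by_contra hcon
    exact absurd (Finset.min'_le _ j (Finset.mem_filter.2 ⟨Finset.mem_univ j, hcon⟩))
      (not_le.2 hj)
  -- extended sequences
  set W : ℕ → ℝ := fun i => if h : i < k then w ⟨i, h⟩ else 0 with hW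
  have hconv : ∀ (τ : Fin k → Fin n),
      ∑ i ∈ Finset.range k, W i * (if h : i < k then f (τ ⟨i, h⟩) else 0)
        = ∑ i : Fin k, w i * f (τ i) := by
    intro τ
    rw [← Fin.sum_univ_eq_sum_range
      (fun i => W i * (if h : i < k then f (τ ⟨i, h⟩) else 0)) k]
    refine Finset.sum_congr rfl fun i _ => ?_
    simp [hW, i.isLt]
  rw [← hconv γ, ← hconv σ]
  have hps : ∀ m, m ≤ k →
      ∑ i ∈ Finset.range m, (if h : i < k then f (γ ⟨i, h⟩) else 0)
        ≤ ∑ i ∈ Finset.range m, (if h : i < k then f (σ ⟨i, h⟩) else 0) := by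
    intro m hm
    rw [bridge k (fun i => f (γ i)) m hm, bridge k (fun i => f (σ i)) m hm]
    exact (top_lemma n k f σ γ hσ hγ h1 h2 m).1
  have hm0 : (i0 : ℕ) + 1 ≤ k := i0.isLt
  have hstrict :
      ∑ i ∈ Finset.range ((i0 : ℕ) + 1), (if h : i < k then f (γ ⟨i, h⟩) else 0)
        < ∑ i ∈ Finset.range ((i0 : ℕ) + 1), (if h : i < k then f (σ ⟨i, h⟩) else 0) := by
    rw [bridge k (fun i => f (γ i)) _ hm0, bridge k (fun i => f (σ i)) _ hm0]
    refine (top_lemma n k f σ γ hσ hγ h1 h2 ((i0 : ℕ) + 1)).2 ?_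
    intro hAB
    have hi0I : i0 ∈ Finset.univ.filter (fun i : Fin k => i.val < (i0 : ℕ) + 1) :=
      Finset.mem_filter.2 ⟨Finset.mem_univ i0, Nat.lt_succ_self _⟩
    have hmem : γ i0 ∈ (Finset.univ.filter (fun i : Fin k => i.val < (i0 : ℕ) + 1)).image σ := by
      rw [← hAB]
      exact Finset.mem_image.2 ⟨i0, hi0I, rfl⟩
    obtain ⟨j, hjI, hj⟩ := Finset.mem_image.1 hmem
    have hjle : j ≤ i0 := by
      have := (Finset.mem_filter.1 hjI).2
      exact Fin.le_def.2 (by omega)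
    rcases eq_or_lt_of_le hjle with rfl | hjlt
    · exact hi0ne hj.symm
    · have : γ j = γ i0 := by rw [hi0min j hjlt, hj]
      exact absurd (hγ this) (ne_of_lt hjlt)
  refine weighted_lt _ _ k W (fun i j hij hjk => ?_) (fun i hi => ?_) hps
    ⟨(i0 : ℕ) + 1, Nat.succ_pos _, hm0, hstrict⟩
  · have hik : i < k := hij.trans hjk
    simp only [hW, dif_pos hjk, dif_pos hik]
    exact hw (show (⟨i, hik⟩ : Fin k) < ⟨j, hjk⟩ from hij)
  · simp only [hW, dif_pos hi]
    exact hwpos _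

private lemma fwd (n k : ℕ) (f : Fin n → ℝ) (w : Fin k → ℝ)
    (hw : StrictAnti w) (hwpos : ∀ i, 0 < w i)
    (σ : Fin k → Fin n) (hσ : Function.Injective σ)
    (hmax : ∀ γ : Fin k → Fin n, Function.Injective γ → γ ≠ σ →
      ∑ i : Fin k, w i * f (γ i) < ∑ i : Fin k, w i * f (σ i)) :
    (∀ i j : Fin k, i < j → f (σ j) < f (σ i))
      ∧ (∀ a, a ∉ Set.range σ → ∀ i, f a < f (σ i)) := by
  classical
  constructor
  · intro i j hij
    set e := Equiv.swap i j with he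
    have hγinj : Function.Injective (σ ∘ e) := hσ.comp e.injective
    have hγne : σ ∘ e ≠ σ := by
      intro hcon
      have : σ (e i) = σ i := congrFun hcon i
      rw [he, Equiv.swap_apply_left] at this
      exact (hij.ne' (hσ this)).elim
    have hkey := hmax (σ ∘ e) hγinj hγne
    have hswap : ∑ l : Fin k, w (e l) * f (σ l) = ∑ l : Fin k, w l * f (σ (e l)) :=
      Fintype.sum_equiv e (fun l => w (e l) * f (σ l)) (fun l => w l * f (σ (e l)))
        (fun l => by simp [he, Equiv.swap_apply_self])
    have hpos : 0 < ∑ l : Fin k, (w l * f (σ l) - w (e l) * f (σ l)) := by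
      rw [Finset.sum_sub_distrib]
      have : ∑ l : Fin k, w (e l) * f (σ l) = ∑ l : Fin k, w l * f ((σ ∘ e) l) := by
        rw [hswap]; rfl
      rw [this]
      linarith
    have hsum2 : ∑ l : Fin k, (w l * f (σ l) - w (e l) * f (σ l))
        = ∑ l ∈ ({i, j} : Finset (Fin k)), (w l * f (σ l) - w (e l) * f (σ l)) := by
      refine (Finset.sum_subset (Finset.subset_univ _) ?_).symm
      intro l _ hl
      simp only [Finset.mem_insert, Finset.mem_singleton, not_or] at hl
      rw [he, Equiv.swap_apply_of_ne_of_ne hl.1 hl.2]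
      ring
    rw [hsum2, Finset.sum_pair hij.ne] at hpos
    rw [he, Equiv.swap_apply_left, Equiv.swap_apply_right] at hpos
    have hwij : w j < w i := hw hij
    nlinarith
  · intro a ha i
    set γ := Function.update σ i a with hγdef
    have hγinj : Function.Injective γ := by
      intro b c hbc
      rw [hγdef] at hbc
      by_cases hb : b = i <;> by_cases hc : c = i
      · rw [hb, hc]
      · rw [hb] at hbc ⊢
        rw [Function.update_self, Function.update_of_ne hc] at hbc
        exact absurd ⟨c, hbc.symm⟩ ha
      · rw [hc] at hbc ⊢
        rw [Function.update_self, Function.update_of_ne hb] at hbc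
        exact absurd ⟨b, hbc⟩ ha
      · rw [Function.update_of_ne hb, Function.update_of_ne hc] at hbc
        exact hσ hbc
    have hγne : γ ≠ σ := by
      intro hcon
      have : γ i = σ i := congrFun hcon i
      rw [hγdef, Function.update_self] at this
      exact ha ⟨i, this.symm⟩
    have hkey := hmax γ hγinj hγne
    have hpos : 0 < ∑ l : Fin k, (w l * f (σ l) - w l * f (γ l)) := by
      rw [Finset.sum_sub_distrib]
      linarith
    have hsum2 : ∑ l : Fin k, (w l * f (σ l) - w l * f (γ l))
        = ∑ l ∈ ({i} : Finset (Fin k)), (w l * f (σ l) - w l * f (γ l)) := by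
      refine (Finset.sum_subset (Finset.subset_univ _) ?_).symm
      intro l _ hl
      simp only [Finset.mem_singleton] at hl
      rw [hγdef, Function.update_of_ne hl]
      ring
    rw [hsum2, Finset.sum_singleton, hγdef, Function.update_self] at hpos
    have := hwpos i
    nlinarith

/-- The normal fan of the `k`-ordertope is independent of the choice of strictly
decreasing positive weights: `c` strictly maximizes at `p_σ^α` over all injective
`γ ≠ σ` if and only if it does so for the weights `β`. -/
theorem normal_fan_independent_of_weights
    (d n k : ℕ) (hd : 0 < d) (hn : 0 < n) (hk : 0 < k) (hkn : k ≤ n)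
    (u : Fin n → EuclideanSpace ℝ (Fin d)) (hu : Function.Injective u)
    (α β : Fin k → ℝ)
    (hα : StrictAnti α) (hαpos : ∀ i, 0 < α i)
    (hβ : StrictAnti β) (hβpos : ∀ i, 0 < β i)
    (σ : Fin k → Fin n) (hσ : Function.Injective σ)
    (c : EuclideanSpace ℝ (Fin d)) :
    (∀ γ : Fin k → Fin n, Function.Injective γ → γ ≠ σ →
      ⟪c, (∑ i : Fin k, α i • u (γ i))⟫ < ⟪c, (∑ i : Fin k, α i • u (σ i))⟫) ↔
    (∀ γ : Fin k → Fin n, Function.Injective γ → γ ≠ σ →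
      ⟪c, (∑ i : Fin k, β i • u (γ i))⟫ < ⟪c, (∑ i : Fin k, β i • u (σ i))⟫) := by
  set f : Fin n → ℝ := fun j => ⟪c, u j⟫ with hf
  have hconv : ∀ (w : Fin k → ℝ) (τ : Fin k → Fin n),
      ⟪c, (∑ i : Fin k, w i • u (τ i))⟫ = ∑ i : Fin k, w i * f (τ i) := by
    intro w τ
    rw [inner_sum]
    exact Finset.sum_congr rfl fun i _ => real_inner_smul_right c (u (τ i)) (w i)
  constructor
  · intro H γ hγinj hγne
    have hmax : ∀ γ' : Fin k → Fin n, Function.Injective γ' → γ' ≠ σ →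
        ∑ i : Fin k, α i * f (γ' i) < ∑ i : Fin k, α i * f (σ i) := by
      intro γ' h1 h2
      have := H γ' h1 h2
      rwa [hconv, hconv] at this
    obtain ⟨h1, h2⟩ := fwd n k f α hα hαpos σ hσ hmax
    rw [hconv, hconv]
    exact bwd n k f β hβ hβpos σ hσ h1 h2 γ hγinj hγne
  · intro H γ hγinj hγne
    have hmax : ∀ γ' : Fin k → Fin n, Function.Injective γ' → γ' ≠ σ →
        ∑ i : Fin k, β i * f (γ' i) < ∑ i : Fin k, β i * f (σ i) := by
      intro γ' h1 h2
      have := H γ' h1 h2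
      rwa [hconv, hconv] at this
    obtain ⟨h1, h2⟩ := fwd n k f β hβ hβpos σ hσ hmax
    rw [hconv, hconv]
    exact bwd n k f α hα hαpos σ hσ h1 h2 γ hγinj hγne
end

section
/- Greedy sorted selection maximizes any functional over the k-ordertope: let c be a linear functional and let σ : Fin k → Fin n be injective with ⟨c,u(σ 1)⟩ ≥ ⟨c,u(σ 2)⟩ ≥ ... ≥ ⟨c,u(σ k)⟩ and ⟨c,u(σ k)⟩ ≥ ⟨c,u j⟩ for every index j not in the range of σ (i.e. σ selects k indices achieving the k largest values of ⟨c,u j⟩ in decreasing order). Then for every injective γ : Fin k → Fin n one has ⟨c, p_γ⟩ ≤ ⟨c, p_σ⟩; hence p_σ maximizes c over the k-ordertope P_k. -/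
open scoped RealInnerProductSpace
open Finset

/-- Abel summation comparison: if `a` is antitone and nonnegative on `range k`
and partial sums of `x` are dominated by partial sums of `y`, then the weighted
sum of `x` is dominated by that of `y`. -/
lemma abel_mono_aux (k : ℕ) (a x y : ℕ → ℝ)
    (ha : ∀ i j, i ≤ j → j < k → a j ≤ a i) (ha0 : ∀ i, i < k → 0 ≤ a i)
    (hxy : ∀ m, m < k → ∑ i ∈ range (m+1), x i ≤ ∑ i ∈ range (m+1), y i) :
    ∑ i ∈ range k, a i * x i ≤ ∑ i ∈ range k, a i * y i := by
  set a' : ℕ → ℝ := fun i => if i < k then a i else 0 with ha'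
  set δ : ℕ → ℝ := fun j => a' j - a' (j+1) with hδ
  have hδ0 : ∀ j, 0 ≤ δ j := by
    intro j
    simp only [hδ, ha']
    split_ifs with h1 h2
    · linarith [ha j (j+1) (Nat.le_succ j) h2]
    · simpa using ha0 j h1
    · omega
    · simp
  have htel : ∀ i, i < k → a i = ∑ j ∈ Finset.Ico i k, δ j := by
    intro i hi
    rw [Finset.sum_Ico_eq_sum_range]
    have h2 : ∀ j ∈ range (k - i), δ (i + j) = a' (i + j) - a' (i + (j + 1)) := by
      intro j _; rfl
    rw [Finset.sum_congr rfl h2, Finset.sum_range_sub' (fun j => a' (i + j)) (k - i)]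
    have : i + (k - i) = k := by omega
    simp [this, ha', hi]
  have key : ∀ z : ℕ → ℝ, ∑ i ∈ range k, a i * z i
      = ∑ j ∈ range k, δ j * ∑ i ∈ range (j+1), z i := by
    intro z
    have h1 : ∑ i ∈ range k, a i * z i
        = ∑ i ∈ range k, ∑ j ∈ range k, (if i ≤ j then δ j * z i else 0) := by
      refine Finset.sum_congr rfl fun i hi => ?_
      rw [Finset.mem_range] at hi
      rw [htel i hi, Finset.sum_mul]
      have hIco : Finset.Ico i k = (range k).filter (fun j => i ≤ j) := by
        ext t; simp [Finset.mem_Ico, Finset.mem_filter, Finset.mem_range, and_comm]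
      rw [hIco, Finset.sum_filter]
    rw [h1, Finset.sum_comm]
    refine Finset.sum_congr rfl fun j hj => ?_
    rw [Finset.mem_range] at hj
    have hfil : (range (j+1)) = (range k).filter (fun i => i ≤ j) := by
      ext t; simp [Finset.mem_filter, Finset.mem_range]; omega
    rw [Finset.mul_sum, hfil, Finset.sum_filter]
  rw [key x, key y]
  exact Finset.sum_le_sum fun j hj =>
    mul_le_mul_of_nonneg_left (hxy j (Finset.mem_range.1 hj)) (hδ0 j)

lemma sum_dite_range_eq_sum_Iic {k : ℕ} (g : Fin k → ℝ) (m : ℕ) (hm : m < k) :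
    ∑ i ∈ range (m+1), (if h : i < k then g ⟨i, h⟩ else 0)
      = ∑ i ∈ Finset.Iic (⟨m, hm⟩ : Fin k), g i := by
  have h1 : ∑ i ∈ range (m+1), (if h : i < k then g ⟨i, h⟩ else 0)
      = ∑ i ∈ range k, (if h : i < k then (if i ≤ m then g ⟨i, h⟩ else 0) else 0) := by
    rw [← Finset.sum_subset (Finset.range_subset_range.2 hm)]
    · refine Finset.sum_congr rfl fun i hi => ?_
      rw [Finset.mem_range] at hi
      have : i ≤ m := by omega
      simp [this]
    · intro i _ hi
      rw [Finset.mem_range, not_lt] at hi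
      have : ¬ i ≤ m := by omega
      simp [this]
  have h2 : ∑ i ∈ Finset.Iic (⟨m, hm⟩ : Fin k), g i
      = ∑ i : Fin k, (if i ≤ (⟨m, hm⟩ : Fin k) then g i else 0) := by
    rw [← Finset.sum_filter]
    refine Finset.sum_congr ?_ fun _ _ => rfl
    ext i; simp [Finset.mem_Iic]
  rw [h1, h2,
    ← Fin.sum_univ_eq_sum_range (fun i => if h : i < k then (if i ≤ m then g ⟨i, h⟩ else 0) else 0) k]
  refine Finset.sum_congr rfl fun i _ => ?_
  simp [i.isLt, Fin.le_def]

/-- Greedy sorted selection maximizes any functional over the `k`-ordertope: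
if `σ` selects `k` indices achieving the `k` largest values of `⟪c, u j⟫` in
decreasing order, then `⟪c, p_γ⟫ ≤ ⟪c, p_σ⟫` for every injective `γ`; hence
`p_σ` maximizes `c` over the `k`-ordertope `P_k`. -/
theorem greedy_selection_maximizes
    (d n k : ℕ) (hd : 0 < d) (hn : 0 < n) (hk : 0 < k) (hkn : k ≤ n)
    (u : Fin n → EuclideanSpace ℝ (Fin d)) (hu : Function.Injective u)
    (α : Fin k → ℝ) (hα : StrictAnti α) (hαpos : ∀ i, 0 < α i)
    (σ : Fin k → Fin n) (hσ : Function.Injective σ)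
    (c : EuclideanSpace ℝ (Fin d))
    (hord : ∀ i j : Fin k, i ≤ j → ⟪c, u (σ j)⟫ ≤ ⟪c, u (σ i)⟫)
    (hout : ∀ j : Fin n, j ∉ Set.range σ →
      ⟪c, u j⟫ ≤ ⟪c, u (σ ⟨k - 1, Nat.sub_lt hk Nat.one_pos⟩)⟫) :
    (∀ γ : Fin k → Fin n, Function.Injective γ →
      ⟪c, (∑ i : Fin k, α i • u (γ i))⟫ ≤ ⟪c, (∑ i : Fin k, α i • u (σ i))⟫) ∧
    (∀ x ∈ convexHull ℝ
        {x : EuclideanSpace ℝ (Fin d) |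
          ∃ τ : Fin k → Fin n, Function.Injective τ ∧ x = ∑ i : Fin k, α i • u (τ i)},
      ⟪c, x⟫ ≤ ⟪c, (∑ i : Fin k, α i • u (σ i))⟫) := by
  set f : Fin n → ℝ := fun j => ⟪c, u j⟫ with hf
  have hin : ∀ τ : Fin k → Fin n,
      ⟪c, (∑ i : Fin k, α i • u (τ i))⟫ = ∑ i : Fin k, α i * f (τ i) := by
    intro τ
    rw [inner_sum]
    exact Finset.sum_congr rfl fun i _ => real_inner_smul_right c (u (τ i)) (α i)
  have hmain : ∀ γ : Fin k → Fin n, Function.Injective γ →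
      ⟪c, (∑ i : Fin k, α i • u (γ i))⟫ ≤ ⟪c, (∑ i : Fin k, α i • u (σ i))⟫ := by
    intro γ hγ
    rw [hin γ, hin σ]
    -- top-sum domination
    have htop : ∀ m : Fin k,
        ∑ i ∈ Finset.Iic m, f (γ i) ≤ ∑ i ∈ Finset.Iic m, f (σ i) := by
      intro m
      set S := (Finset.Iic m).image γ with hSdef
      set T := (Finset.Iic m).image σ with hTdef
      have hSsum : ∑ j ∈ S, f j = ∑ i ∈ Finset.Iic m, f (γ i) :=
        Finset.sum_image (fun x _ y _ h => hγ h)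
      have hTsum : ∑ j ∈ T, f j = ∑ i ∈ Finset.Iic m, f (σ i) :=
        Finset.sum_image (fun x _ y _ h => hσ h)
      have hcard : S.card = T.card := by
        rw [Finset.card_image_of_injOn (Set.injOn_of_injective hγ),
          Finset.card_image_of_injOn (Set.injOn_of_injective hσ)]
      have hub : ∀ j ∈ S \ T, f j ≤ f (σ m) := by
        intro j hj
        rw [Finset.mem_sdiff] at hj
        obtain ⟨hjS, hjT⟩ := hj
        by_cases hr : j ∈ Set.range σ
        · obtain ⟨l, rfl⟩ := hr
          have hlm : ¬ l ≤ m := fun h => hjT (Finset.mem_image.2 ⟨l, Finset.mem_Iic.2 h, rfl⟩)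
          exact hord m l (le_of_not_ge hlm)
        · refine le_trans (hout j hr) (hord m ⟨k - 1, Nat.sub_lt hk Nat.one_pos⟩ ?_)
          have := m.isLt
          rw [Fin.le_def]; simp; omega
      have hlb : ∀ j ∈ T \ S, f (σ m) ≤ f j := by
        intro j hj
        rw [Finset.mem_sdiff] at hj
        obtain ⟨l, hl, rfl⟩ := Finset.mem_image.1 hj.1
        exact hord l m (Finset.mem_Iic.1 hl)
      have hcard2 : (S \ T).card = (T \ S).card := Finset.card_sdiff_comm hcard
      have h1 : ∑ j ∈ S \ T, f j ≤ ∑ j ∈ T \ S, f j := by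
        calc ∑ j ∈ S \ T, f j ≤ (S \ T).card • f (σ m) :=
              Finset.sum_le_card_nsmul _ _ _ hub
          _ = (T \ S).card • f (σ m) := by rw [hcard2]
          _ ≤ ∑ j ∈ T \ S, f j := Finset.card_nsmul_le_sum _ _ _ hlb
      have hSsplit := Finset.sum_inter_add_sum_sdiff S T f
      have hTsplit := Finset.sum_inter_add_sum_sdiff T S f
      have hinter : ∑ x ∈ S ∩ T, f x = ∑ x ∈ T ∩ S, f x := by
        rw [Finset.inter_comm]
      rw [← hSsum, ← hTsum]
      linarith
    -- transfer to ℕ and apply Abel summation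
    set A : ℕ → ℝ := fun i => if h : i < k then α ⟨i, h⟩ else 0 with hA
    set X : ℕ → ℝ := fun i => if h : i < k then f (γ ⟨i, h⟩) else 0 with hX
    set Y : ℕ → ℝ := fun i => if h : i < k then f (σ ⟨i, h⟩) else 0 with hY
    have e1 : ∀ (τ : Fin k → Fin n), ∑ i : Fin k, α i * f (τ i)
        = ∑ i ∈ range k, A i * (if h : i < k then f (τ ⟨i, h⟩) else 0) := by
      intro τ
      rw [← Fin.sum_univ_eq_sum_range (fun i => A i * (if h : i < k then f (τ ⟨i, h⟩) else 0)) k]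
      refine Finset.sum_congr rfl fun i _ => ?_
      simp [hA, i.isLt]
    rw [e1 γ, e1 σ]
    refine abel_mono_aux k A X Y ?_ ?_ ?_
    · intro i j hij hj
      have hi : i < k := lt_of_le_of_lt hij hj
      simp only [hA, dif_pos hi, dif_pos hj]
      exact (hα.antitone (show (⟨i, hi⟩ : Fin k) ≤ ⟨j, hj⟩ from hij))
    · intro i hi
      simp only [hA, dif_pos hi]
      exact (hαpos _).le
    · intro m hm
      have := htop ⟨m, hm⟩
      rwa [← sum_dite_range_eq_sum_Iic (fun i => f (γ i)) m hm,
        ← sum_dite_range_eq_sum_Iic (fun i => f (σ i)) m hm] at this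
  refine ⟨hmain, ?_⟩
  intro x hx
  have hconv : convexHull ℝ {x : EuclideanSpace ℝ (Fin d) |
        ∃ τ : Fin k → Fin n, Function.Injective τ ∧ x = ∑ i : Fin k, α i • u (τ i)}
      ⊆ {x | ⟪c, x⟫ ≤ ⟪c, (∑ i : Fin k, α i • u (σ i))⟫} := by
    refine convexHull_min ?_ ?_
    · rintro y ⟨τ, hτ, rfl⟩
      exact hmain τ hτ
    · exact convex_halfSpace_le
        ⟨fun a b => inner_add_right c a b, fun r a => real_inner_smul_right c a r⟩ _
  exact hconv hx
end

section
/- First half of Lemma 4.1: let v ∈ P be a point for which there exists a functional c with every coordinate strictly positive such that ⟨c,v⟩ > ⟨c,x⟩ for all x ∈ P with x ≠ v (i.e. v is a vertex of P whose normal cone meets the open positive orthant). Then there exists N₀ > 0 such that for every N ≥ N₀, v is an extreme point (vertex) of Q_N = conv(P ∪ {-N e_1, ..., -N e_d}). -/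
open scoped RealInnerProductSpace

/-- First half of Lemma 4.1: if `v` is a vertex of `P = conv V` whose normal cone
meets the open positive orthant (i.e. some strictly positive functional `c` is
uniquely maximized at `v` over `P`), then for all sufficiently large `N`, `v` is
an extreme point of `Q_N = conv (P ∪ {-N e₁, …, -N e_d})`. -/
theorem vertex_of_QN_of_positive_normal_cone
    (d : ℕ) (hd : 0 < d)
    (V : Finset (EuclideanSpace ℝ (Fin d))) (hV : V.Nonempty)
    (v : EuclideanSpace ℝ (Fin d))
    (hv : v ∈ convexHull ℝ (V : Set (EuclideanSpace ℝ (Fin d))))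
    (c : EuclideanSpace ℝ (Fin d)) (hc : ∀ j : Fin d, 0 < c j)
    (hmax : ∀ x ∈ convexHull ℝ (V : Set (EuclideanSpace ℝ (Fin d))),
      x ≠ v → ⟪c, x⟫ < ⟪c, v⟫) :
    ∃ N₀ : ℝ, 0 < N₀ ∧ ∀ N : ℝ, N₀ ≤ N →
      v ∈ Set.extremePoints ℝ (convexHull ℝ
        ((V : Set (EuclideanSpace ℝ (Fin d))) ∪
          Set.range (fun j : Fin d =>
            (-N : ℝ) • (EuclideanSpace.single j (1 : ℝ))))) := by
  classical
  set f : EuclideanSpace ℝ (Fin d) → ℝ := fun x => ⟪c, x⟫ with hf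
  set M : ℝ := f v with hM
  -- minimal coordinate of c
  have hdne : (Finset.univ : Finset (Fin d)).Nonempty := by
    simpa [Finset.univ_nonempty_iff] using Fin.pos_iff_nonempty.mp hd
  obtain ⟨j₀, -, hj₀⟩ := Finset.exists_min_image Finset.univ (fun j => c j) hdne
  set m : ℝ := c j₀ with hm
  have hmpos : 0 < m := hc j₀
  refine ⟨(|M| + 1) / m + 1, by positivity, ?_⟩
  intro N hN
  set S : Set (EuclideanSpace ℝ (Fin d)) :=
    (V : Set (EuclideanSpace ℝ (Fin d))) ∪
      Set.range (fun j : Fin d => (-N : ℝ) • (EuclideanSpace.single j (1 : ℝ))) with hS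
  -- f of the auxiliary points is < M
  have hNpt : ∀ j : Fin d, f ((-N : ℝ) • (EuclideanSpace.single j (1 : ℝ))) < M := by
    intro j
    have h1 : f ((-N : ℝ) • (EuclideanSpace.single j (1 : ℝ))) = -N * c j := by
      simp [hf, real_inner_smul_right, EuclideanSpace.inner_single_right, mul_comm]
    have hNm : (|M| + 1) / m + 1 ≤ N := hN
    have hN1 : (|M| + 1) / m < N := by linarith
    have h2 : |M| + 1 < N * m := by
      have := (div_lt_iff₀ hmpos).mp hN1
      linarith
    have h3 : m ≤ c j := hj₀ j (Finset.mem_univ j)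
    have hNpos : 0 < N := by
      have : 0 < (|M| + 1) / m := by positivity
      linarith
    have h4 : N * m ≤ N * c j := by nlinarith
    have h5 : -(N * c j) < M := by
      have : |M| < N * c j := by linarith
      have := abs_lt.mp this
      linarith [neg_abs_le M]
    rw [h1]; linarith
  -- key set: f ≤ M and equality only at v
  set K : Set (EuclideanSpace ℝ (Fin d)) :=
    {x | f x ≤ M ∧ (f x = M → x = v)} with hK
  have hfadd : ∀ (a b : ℝ) (x y : EuclideanSpace ℝ (Fin d)),
      f (a • x + b • y) = a * f x + b * f y := by
    intro a b x y
    simp only [hf, real_inner_smul_right, inner_add_right]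
  have hKconv : Convex ℝ K := by
    intro x hx y hy a b ha hb hab
    have hMM : a * M + b * M = M := by rw [← add_mul, hab, one_mul]
    have hfz : f (a • x + b • y) = a * f x + b * f y := hfadd a b x y
    constructor
    · rw [hfz]
      calc a * f x + b * f y ≤ a * M + b * M := by
            apply add_le_add
            · exact mul_le_mul_of_nonneg_left hx.1 ha
            · exact mul_le_mul_of_nonneg_left hy.1 hb
        _ = M := by rw [← add_mul, hab, one_mul]
    · intro heq
      rcases eq_or_lt_of_le ha with ha0 | ha0
      · have hb1 : b = 1 := by linarith
        have : a • x + b • y = y := by rw [← ha0, hb1]; simp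
        rw [this] at heq ⊢
        exact hy.2 heq
      rcases eq_or_lt_of_le hb with hb0 | hb0
      · have ha1 : a = 1 := by linarith
        have : a • x + b • y = x := by rw [← hb0, ha1]; simp
        rw [this] at heq ⊢
        exact hx.2 heq
      -- a > 0, b > 0
      have hx1 : f x = M := by
        by_contra hne
        have hxlt : f x < M := lt_of_le_of_ne hx.1 hne
        have : a * f x + b * f y < a * M + b * M := by
          apply add_lt_add_of_lt_of_le
          · exact mul_lt_mul_of_pos_left hxlt ha0
          · exact mul_le_mul_of_nonneg_left hy.1 hb
        rw [hfz] at heq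
        linarith
      have hy1 : f y = M := by
        rw [hfz, hx1] at heq
        have : b * f y = b * M := by linarith
        exact mul_left_cancel₀ (ne_of_gt hb0) this
      rw [hx.2 hx1, hy.2 hy1, ← add_smul, hab, one_smul]
  -- S ⊆ K
  have hSK : S ⊆ K := by
    rintro x (hxV | ⟨j, rfl⟩)
    · by_cases hxv : x = v
      · subst hxv; exact ⟨le_refl M, fun _ => rfl⟩
      · have := hmax x (subset_convexHull ℝ _ hxV) hxv
        exact ⟨this.le, fun h => absurd h this.ne⟩
    · have := hNpt j
      exact ⟨this.le, fun h => absurd h this.ne⟩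
  have hhullK : convexHull ℝ S ⊆ K := convexHull_min hSK hKconv
  -- v is in the hull
  have hvS : v ∈ convexHull ℝ S := by
    apply convexHull_mono Set.subset_union_left hv
  rw [mem_extremePoints]
  refine ⟨hvS, ?_⟩
  intro x₁ hx₁ x₂ hx₂ hseg
  obtain ⟨a, b, ha, hb, hab, hsum⟩ := hseg
  have hK1 := hhullK hx₁
  have hK2 := hhullK hx₂
  have hfv : a * f x₁ + b * f x₂ = M := by
    rw [← hfadd, hsum]
  have hMM : a * M + b * M = M := by rw [← add_mul, hab, one_mul]
  have hx1M : f x₁ = M := by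
    by_contra hne
    have hlt : f x₁ < M := lt_of_le_of_ne hK1.1 hne
    have : a * f x₁ + b * f x₂ < a * M + b * M := by
      apply add_lt_add_of_lt_of_le
      · exact mul_lt_mul_of_pos_left hlt ha
      · exact mul_le_mul_of_nonneg_left hK2.1 hb.le
    linarith
  have hx2M : f x₂ = M := by
    rw [hx1M] at hfv
    have : b * f x₂ = b * M := by linarith
    exact mul_left_cancel₀ (ne_of_gt hb) this
  exact ⟨hK1.2 hx1M, hK2.2 hx2M⟩
end

section
/- Farkas-type separation step in the proof of Lemma 4.1: let v ∈ P be a point such that for every nonzero nonnegative functional c there exists x ∈ P with ⟨c,x⟩ > ⟨c,v⟩ (i.e. v does not weakly maximize any nonzero nonnegative functional over P). Then there exists a point x ∈ P such that x_j > v_j for every coordinate j = 1, ..., d. -/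
open scoped RealInnerProductSpace

/-- Farkas-type separation step in the proof of Lemma 4.1: if `v ∈ P = conv V`
does not weakly maximize any nonzero nonnegative functional over `P`, then there
is a point `x ∈ P` which strictly dominates `v` in every coordinate. -/
theorem exists_dominating_point_of_no_nonneg_maximizer
    (d : ℕ) (hd : 0 < d)
    (V : Finset (EuclideanSpace ℝ (Fin d))) (hV : V.Nonempty)
    (v : EuclideanSpace ℝ (Fin d))
    (hv : v ∈ convexHull ℝ (V : Set (EuclideanSpace ℝ (Fin d))))
    (hnotmax : ∀ c : EuclideanSpace ℝ (Fin d), c ≠ 0 → (∀ j : Fin d, 0 ≤ c j) →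
      ∃ x ∈ convexHull ℝ (V : Set (EuclideanSpace ℝ (Fin d))), ⟪c, v⟫ < ⟪c, x⟫) :
    ∃ x ∈ convexHull ℝ (V : Set (EuclideanSpace ℝ (Fin d))),
      ∀ j : Fin d, v j < x j := by
  classical
  by_contra hcon
  push_neg at hcon
  -- the open upper orthant based at v
  set U : Set (EuclideanSpace ℝ (Fin d)) := {x | ∀ j, v j < x j} with hU
  have hUopen : IsOpen U := by
    have : U = ⋂ j : Fin d,
        (EuclideanSpace.proj j : EuclideanSpace ℝ (Fin d) →L[ℝ] ℝ) ⁻¹' Set.Ioi (v j) := by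
      ext x
      simp only [hU, Set.mem_setOf_eq, Set.mem_iInter, Set.mem_preimage, Set.mem_Ioi]
      rfl
    rw [this]
    exact isOpen_iInter_of_finite fun j =>
      (isOpen_Ioi).preimage (EuclideanSpace.proj j).continuous
  have hUconv : Convex ℝ U := by
    intro x hx y hy a b ha hb hab j
    have hx' := hx j
    have hy' := hy j
    have hj : (a • x + b • y) j = a * x j + b * y j := rfl
    show v j < (a • x + b • y) j
    rw [hj]
    rcases eq_or_lt_of_le ha with h0 | h0
    · rw [← h0] at hab ⊢
      simp at hab ⊢
      rw [hab]; simpa using hy'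
    · have hC : a * v j + b * v j = v j := by rw [← add_mul, hab, one_mul]
      nlinarith [mul_pos h0 (sub_pos.mpr hx'), mul_nonneg hb (sub_nonneg.mpr hy'.le)]
  have hdisj : Disjoint U (convexHull ℝ (V : Set (EuclideanSpace ℝ (Fin d)))) := by
    rw [Set.disjoint_left]
    intro x hxU hxP
    obtain ⟨j, hj⟩ := hcon x hxP
    exact absurd hj (not_le.mpr (hxU j))
  obtain ⟨f, u, hfU, hfP⟩ :=
    geometric_hahn_banach_open hUconv hUopen (convex_convexHull ℝ _) hdisj
  -- the all-ones direction and a base point in U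
  set ones : EuclideanSpace ℝ (Fin d) := WithLp.toLp 2 (fun _ => (1 : ℝ)) with hones
  set w : EuclideanSpace ℝ (Fin d) := v + ones with hw
  have hwU : w ∈ U := by
    intro j
    show v j < w j
    have : w j = v j + 1 := rfl
    simp [this]
  -- f is nonpositive on coordinate directions
  have hfe : ∀ j : Fin d, f (EuclideanSpace.single j (1:ℝ)) ≤ 0 := by
    intro j
    by_contra hpos
    push_neg at hpos
    obtain ⟨t, ht⟩ : ∃ t : ℝ, t = (u - f w) / f (EuclideanSpace.single j (1:ℝ)) + 1 :=
      ⟨_, rfl⟩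
    have hfw : f w < u := hfU w hwU
    have htpos : 0 < t := by
      have h4 : 0 < (u - f w) / f (EuclideanSpace.single j (1:ℝ)) :=
        div_pos (by linarith) hpos
      rw [ht]; linarith
    have hmem : w + t • EuclideanSpace.single j (1:ℝ) ∈ U := by
      intro k
      show v k < (w + t • EuclideanSpace.single j (1:ℝ)) k
      have hk : (w + t • EuclideanSpace.single j (1:ℝ)) k
          = w k + t * (EuclideanSpace.single j (1:ℝ)) k := rfl
      rw [hk]
      have hwk : w k = v k + 1 := rfl
      have : (0:ℝ) ≤ t * (EuclideanSpace.single j (1:ℝ)) k := by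
        apply mul_nonneg htpos.le
        by_cases hkj : k = j <;> simp [EuclideanSpace.single_apply, hkj]
      rw [hwk]; linarith
    have hlt := hfU _ hmem
    rw [map_add, map_smul] at hlt
    simp only [smul_eq_mul] at hlt
    have hval : f w + t * f (EuclideanSpace.single j (1:ℝ)) =
        u + f (EuclideanSpace.single j (1:ℝ)) := by
      rw [ht]
      field_simp
      ring
    rw [hval] at hlt
    linarith
  -- f v ≤ u by approximation from inside U
  have hfv : f v ≤ u := by
    by_contra hlt
    push_neg at hlt
    obtain ⟨M, hM⟩ : ∃ M : ℝ, M = |f ones| + 1 := ⟨_, rfl⟩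
    have hMpos : (0:ℝ) < M := by rw [hM]; positivity
    obtain ⟨ε, hε⟩ : ∃ e : ℝ, e = (f v - u) / (2 * M) := ⟨_, rfl⟩
    have hεpos : 0 < ε := by rw [hε]; exact div_pos (by linarith) (by linarith)
    have hmem : v + ε • ones ∈ U := by
      intro j
      show v j < (v + ε • ones) j
      have hj : (v + ε • ones) j = v j + ε * 1 := rfl
      rw [hj]; linarith
    have h1 := hfU _ hmem
    rw [map_add, map_smul] at h1
    simp only [smul_eq_mul] at h1
    have habs : -M ≤ f ones := by
      have h := neg_abs_le (f ones)
      rw [hM]; linarith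
    have h2 : -(ε * M) ≤ ε * f ones := by nlinarith
    have h3 : ε * M = (f v - u) / 2 := by
      rw [hε]
      field_simp
    linarith
  -- construct the nonnegative functional c
  set c : EuclideanSpace ℝ (Fin d) :=
    (InnerProductSpace.toDual ℝ (EuclideanSpace ℝ (Fin d))).symm (-f) with hc
  have hcy : ∀ y : EuclideanSpace ℝ (Fin d), ⟪c, y⟫ = -(f y) := by
    intro y
    rw [hc]
    rw [← InnerProductSpace.toDual_apply_apply (𝕜 := ℝ)]
    simp
  have hcj : ∀ j : Fin d, c j = -(f (EuclideanSpace.single j (1:ℝ))) := by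
    intro j
    have h := hcy (EuclideanSpace.single j (1:ℝ))
    rwa [real_inner_comm, EuclideanSpace.inner_single_left, RCLike.conj_to_real,
      one_mul] at h
  have hcnonneg : ∀ j : Fin d, 0 ≤ c j := by
    intro j; rw [hcj j]; linarith [hfe j]
  have hcne : c ≠ 0 := by
    intro h0
    have hfw : f w < u := hfU w hwU
    have huv : u ≤ f v := hfP v hv
    have hfv0 : f v = 0 := by
      have h := hcy v
      rw [h0] at h
      simpa using h.symm
    have hfw0 : f w = 0 := by
      have h := hcy w
      rw [h0] at h
      simpa using h.symm
    linarith
  obtain ⟨x, hxP, hx⟩ := hnotmax c hcne hcnonneg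
  rw [hcy v, hcy x] at hx
  have := hfP x hxP
  linarith
end

section
/- Second half of Lemma 4.1: let v ∈ P be a point such that for every nonzero nonnegative functional c there exists x ∈ P with ⟨c,x⟩ > ⟨c,v⟩ (i.e. v does not lie on the non-negative envelope of P). Then there exists N₀ > 0 such that for every N ≥ N₀, v is not an extreme point of Q_N = conv(P ∪ {-N e_1, ..., -N e_d}). Equivalently, for N sufficiently large, every point of P that is an extreme point of Q_N weakly maximizes some nonzero nonnegative functional over P. -/
open scoped RealInnerProductSpace

private lemma euclid_sum_single {d : ℕ} (x : EuclideanSpace ℝ (Fin d)) :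
    ∑ j, (x j) • EuclideanSpace.single j (1:ℝ) = x := by
  ext i
  rw [show ((∑ j, (x j) • EuclideanSpace.single j (1:ℝ)) i)
      = ∑ j, ((x j) • EuclideanSpace.single j (1:ℝ)) i from
    by rw [WithLp.ofLp_sum]; exact Finset.sum_apply i Finset.univ _]
  simp [EuclideanSpace.single_apply]

/-- Separation step: if `w ∈ conv V` weakly maximizes no nonzero nonnegative
functional, then some point of `conv V` strictly dominates `w` coordinatewise. -/
private lemma exists_dominating {d : ℕ} (V : Finset (EuclideanSpace ℝ (Fin d)))
    (w : EuclideanSpace ℝ (Fin d))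
    (hw : w ∈ convexHull ℝ (V : Set (EuclideanSpace ℝ (Fin d))))
    (hnm : ∀ c : EuclideanSpace ℝ (Fin d), c ≠ 0 → (∀ j : Fin d, 0 ≤ c j) →
      ∃ x ∈ convexHull ℝ (V : Set (EuclideanSpace ℝ (Fin d))), ⟪c, w⟫ < ⟪c, x⟫) :
    ∃ p ∈ convexHull ℝ (V : Set (EuclideanSpace ℝ (Fin d))), ∀ j, w j < p j := by
  by_contra h
  push_neg at h
  set S : Set (EuclideanSpace ℝ (Fin d)) := {y | ∀ j, w j < y j} with hS
  have hSeq : S = ⋂ j, {y : EuclideanSpace ℝ (Fin d) | w j < (EuclideanSpace.proj j) y} := by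
    ext y; simp [hS, Set.mem_iInter]
  have hSopen : IsOpen S := by
    rw [hSeq]
    exact isOpen_iInter_of_finite fun j =>
      isOpen_lt continuous_const (EuclideanSpace.proj j).continuous
  have hSconv : Convex ℝ S := by
    rw [hSeq]
    exact convex_iInter fun j =>
      convex_halfSpace_gt (EuclideanSpace.proj j).toLinearMap.isLinear (w j)
  have hdisj : Disjoint S (convexHull ℝ (V : Set (EuclideanSpace ℝ (Fin d)))) := by
    rw [Set.disjoint_left]
    intro y hyS hyP
    obtain ⟨j, hj⟩ := h y hyP
    exact absurd (hyS j) (not_lt.2 hj)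
  obtain ⟨f, u, hfS, hfP⟩ := geometric_hahn_banach_open hSconv hSopen (convex_convexHull ℝ _) hdisj
  -- the all-ones vector
  set o : EuclideanSpace ℝ (Fin d) := (WithLp.equiv 2 (Fin d → ℝ)).symm (fun _ => (1:ℝ)) with ho
  have hoi : ∀ i, o i = 1 := fun i => rfl
  have huw : u ≤ f w := hfP w hw
  have hneg : ∀ z : EuclideanSpace ℝ (Fin d), (∀ i, 0 < z i) → f z < 0 := by
    intro z hz
    have hmem : w + z ∈ S := by
      intro j
      have : (w + z) j = w j + z j := rfl
      rw [this]; linarith [hz j]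
    have := hfS _ hmem
    rw [map_add] at this
    linarith
  have hfo : f o < 0 := hneg o (fun i => by rw [hoi]; norm_num)
  have hje : ∀ j, f (EuclideanSpace.single j (1:ℝ)) ≤ 0 := by
    intro j
    by_contra hj
    push_neg at hj
    set ε : ℝ := f (EuclideanSpace.single j (1:ℝ)) / (2 * (1 + |f o|)) with hε
    have habs : 0 ≤ |f o| := abs_nonneg _
    have hεpos : 0 < ε := by
      apply div_pos hj; positivity
    have hz : ∀ i, 0 < (EuclideanSpace.single j (1:ℝ) + ε • o) i := by
      intro i
      have h1 : (EuclideanSpace.single j (1:ℝ) + ε • o) i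
          = EuclideanSpace.single j (1:ℝ) i + ε * o i := rfl
      rw [h1, hoi, EuclideanSpace.single_apply]
      by_cases hij : i = j <;> simp [hij] <;> linarith
    have hlt := hneg _ hz
    rw [map_add, map_smul] at hlt
    have h2 : ε * |f o| < f (EuclideanSpace.single j (1:ℝ)) / 2 := by
      rw [hε, div_mul_eq_mul_div, div_lt_div_iff₀ (by positivity) (by norm_num)]
      nlinarith [hj, habs]
    have h3 : ε • f o = ε * f o := rfl
    nlinarith [neg_abs_le (f o), hεpos, h2, hlt]
  have hwu : f w ≤ u := by
    by_contra hcon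
    push_neg at hcon
    set ε : ℝ := (f w - u) / (2 * (-f o)) with hε
    have hεpos : 0 < ε := by apply div_pos (by linarith); linarith
    have hmem : w + ε • o ∈ S := by
      intro j
      have : (w + ε • o) j = w j + ε * o j := rfl
      rw [this, hoi]
      linarith
    have h5 := hfS _ hmem
    rw [map_add, map_smul] at h5
    have h3 : ε • f o = ε * f o := rfl
    rw [h3] at h5
    have key : ε * (2 * (-f o)) = f w - u :=
      div_mul_cancel₀ _ (ne_of_gt (by linarith : (0:ℝ) < 2 * (-f o)))
    nlinarith [hεpos, hfo, h5, key]
  -- build the separating nonnegative functional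
  set c : EuclideanSpace ℝ (Fin d) :=
    -((InnerProductSpace.toDual ℝ (EuclideanSpace ℝ (Fin d))).symm f) with hc
  have hcx : ∀ x : EuclideanSpace ℝ (Fin d), ⟪c, x⟫ = -(f x) := by
    intro x
    rw [hc, inner_neg_left, InnerProductSpace.toDual_symm_apply]
  have hcj : ∀ j, c j = -(f (EuclideanSpace.single j (1:ℝ))) := by
    intro j
    have h1 := hcx (EuclideanSpace.single j (1:ℝ))
    rw [EuclideanSpace.inner_single_right] at h1
    simpa using h1
  have hcne : c ≠ 0 := by
    intro h0
    have hwoS : w + o ∈ S := by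
      intro j
      have : (w + o) j = w j + o j := rfl
      rw [this, hoi]; linarith
    have h1 := hfS _ hwoS
    have h2 : (0:ℝ) = -(f (w + o)) := by
      rw [← hcx (w + o), h0, inner_zero_left]
    have h4 : (0:ℝ) = -(f w) := by
      rw [← hcx w, h0, inner_zero_left]
    have h3 := hfP w hw
    linarith
  obtain ⟨x, hxP, hlt⟩ := hnm c hcne (fun j => by rw [hcj]; linarith [hje j])
  rw [hcx, hcx] at hlt
  have := hfP x hxP
  linarith

private lemma not_extreme_of_dominated {d : ℕ} (hd : 0 < d)
    (V : Finset (EuclideanSpace ℝ (Fin d)))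
    (w : EuclideanSpace ℝ (Fin d))
    (hw : w ∈ convexHull ℝ (V : Set (EuclideanSpace ℝ (Fin d))))
    (p : EuclideanSpace ℝ (Fin d))
    (hp : p ∈ convexHull ℝ (V : Set (EuclideanSpace ℝ (Fin d))))
    (hdom : ∀ j, w j < p j) :
    ∃ T : ℝ, 0 < T ∧ ∀ N : ℝ, T ≤ N →
      w ∉ Set.extremePoints ℝ (convexHull ℝ
        ((V : Set (EuclideanSpace ℝ (Fin d))) ∪
          Set.range (fun j : Fin d =>
            (-N : ℝ) • (EuclideanSpace.single j (1 : ℝ))))) := by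
  haveI : Nonempty (Fin d) := ⟨⟨0, hd⟩⟩
  set a : EuclideanSpace ℝ (Fin d) := p - w with ha
  have haj : ∀ j, 0 < a j := by
    intro j
    have : a j = p j - w j := rfl
    rw [this]; linarith [hdom j]
  set A : ℝ := ∑ j, a j with hA
  set W : ℝ := ∑ j, w j with hW
  have hApos : 0 < A := Finset.sum_pos (fun j _ => haj j) Finset.univ_nonempty
  set SS : ℝ := ∑ j, A * |w j| / a j with hSS
  have hSSnn : 0 ≤ SS :=
    Finset.sum_nonneg fun j _ => div_nonneg (by positivity) (haj j).le
  refine ⟨1 + |W| + A + SS, by positivity, ?_⟩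
  intro N hN hext
  have hNpos : (0:ℝ) < N := by
    have := abs_nonneg W; linarith
  set M : ℝ := N + W with hM
  have hM1 : 1 + A + SS ≤ M := by
    have := neg_abs_le W; rw [hM]; linarith
  have hMpos : 0 < M := by linarith
  have hMA : A ≤ M := by linarith
  have hkey : ∀ j, A * w j ≤ a j * M := by
    intro j
    have h1 : A * |w j| / a j ≤ SS :=
      Finset.single_le_sum (f := fun j => A * |w j| / a j)
        (fun i _ => div_nonneg (by positivity) (haj i).le) (Finset.mem_univ j)
    have h2 : A * |w j| / a j ≤ M := by linarith
    have h3 : A * |w j| ≤ M * a j := (div_le_iff₀ (haj j)).1 h2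
    have h4 : A * w j ≤ A * |w j| := by
      apply mul_le_mul_of_nonneg_left (le_abs_self _) hApos.le
    linarith [h3, h4]
  set σ : ℝ := A / M with hσ
  set σf : Fin d → ℝ := fun j => (a j - σ * w j) / N with hσf
  have hσpos : 0 < σ := div_pos hApos hMpos
  have hσle : σ ≤ 1 := (div_le_one hMpos).2 hMA
  have hσfnn : ∀ j, 0 ≤ σf j := by
    intro j
    apply div_nonneg _ hNpos.le
    have : σ * w j ≤ a j := by
      rw [hσ, div_mul_eq_mul_div, div_le_iff₀ hMpos]
      linarith [hkey j]
    linarith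
  have hsum : ∑ j, σf j = σ := by
    rw [hσf]
    have : ∑ j, (a j - σ * w j) / N = (A - σ * W) / N := by
      rw [← Finset.sum_div, hA, hW, Finset.mul_sum, Finset.sum_sub_distrib]
    rw [this, hσ, hM]
    have hNW : N + W ≠ 0 := by rw [← hM]; exact hMpos.ne'
    field_simp
    ring
  -- the vector identity
  have hvec : (1 - σ) • w +
      ∑ j, (σf j) • ((-N : ℝ) • (EuclideanSpace.single j (1:ℝ))) = w - a := by
    have h1 : ∀ j, (σf j) • ((-N : ℝ) • (EuclideanSpace.single j (1:ℝ)))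
        = -(((a - σ • w) j) • (EuclideanSpace.single j (1:ℝ))) := by
      intro j
      rw [smul_smul, ← neg_smul]
      congr 1
      have haσ : (a - σ • w) j = a j - σ * w j := rfl
      rw [haσ, hσf]
      field_simp
    rw [Finset.sum_congr rfl (fun j _ => h1 j), Finset.sum_neg_distrib,
      euclid_sum_single (a - σ • w)]
    module
  -- membership of w - a in Q_N
  have hwQ : w ∈ convexHull ℝ
      ((V : Set (EuclideanSpace ℝ (Fin d))) ∪
        Set.range (fun j : Fin d => (-N : ℝ) • (EuclideanSpace.single j (1:ℝ)))) :=
    convexHull_mono Set.subset_union_left hw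
  have hpQ : p ∈ convexHull ℝ
      ((V : Set (EuclideanSpace ℝ (Fin d))) ∪
        Set.range (fun j : Fin d => (-N : ℝ) • (EuclideanSpace.single j (1:ℝ)))) :=
    convexHull_mono Set.subset_union_left hp
  have hq : w - a ∈ convexHull ℝ
      ((V : Set (EuclideanSpace ℝ (Fin d))) ∪
        Set.range (fun j : Fin d => (-N : ℝ) • (EuclideanSpace.single j (1:ℝ)))) := by
    rw [← hvec]
    have := (convex_convexHull ℝ
        ((V : Set (EuclideanSpace ℝ (Fin d))) ∪
          Set.range (fun j : Fin d => (-N : ℝ) • (EuclideanSpace.single j (1:ℝ))))).sum_mem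
      (t := (Finset.univ : Finset (Option (Fin d))))
      (w := fun i => Option.elim i (1 - σ) σf)
      (z := fun i => Option.elim i w (fun j => (-N : ℝ) • (EuclideanSpace.single j (1:ℝ))))
      (by
        rintro (_ | j) _
        · simpa using by linarith [hσle]
        · exact hσfnn j)
      (by
        rw [Fintype.sum_option]
        simp only [Option.elim]
        rw [hsum]; ring)
      (by
        rintro (_ | j) _
        · exact hwQ
        · exact subset_convexHull ℝ _ (Set.mem_union_right _ ⟨j, rfl⟩))
    rw [Fintype.sum_option] at this
    simpa using this
  -- contradiction with extremality
  rw [mem_extremePoints] at hext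
  obtain ⟨hwQ', hkey2⟩ := hext
  have hseg : w ∈ openSegment ℝ (w - a) p := by
    refine ⟨1/2, 1/2, by norm_num, by norm_num, by norm_num, ?_⟩
    rw [ha]
    module
  obtain ⟨-, h2⟩ := hkey2 (w - a) hq p hpQ hseg
  have := hdom ⟨0, hd⟩
  rw [h2] at this
  exact lt_irrefl _ this

private lemma key_per_point {d : ℕ} (hd : 0 < d)
    (V : Finset (EuclideanSpace ℝ (Fin d)))
    (w : EuclideanSpace ℝ (Fin d)) :
    ∃ T : ℝ, 0 < T ∧ ∀ N : ℝ, T ≤ N →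
      w ∈ convexHull ℝ (V : Set (EuclideanSpace ℝ (Fin d))) →
      w ∈ Set.extremePoints ℝ (convexHull ℝ
        ((V : Set (EuclideanSpace ℝ (Fin d))) ∪
          Set.range (fun j : Fin d =>
            (-N : ℝ) • (EuclideanSpace.single j (1 : ℝ))))) →
      ∃ c : EuclideanSpace ℝ (Fin d), c ≠ 0 ∧ (∀ j : Fin d, 0 ≤ c j) ∧
        ∀ x ∈ convexHull ℝ (V : Set (EuclideanSpace ℝ (Fin d))),
          ⟪c, x⟫ ≤ ⟪c, w⟫ := by
  by_cases hmem : w ∈ convexHull ℝ (V : Set (EuclideanSpace ℝ (Fin d)))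
  · by_cases hc : ∃ c : EuclideanSpace ℝ (Fin d), c ≠ 0 ∧ (∀ j : Fin d, 0 ≤ c j) ∧
        ∀ x ∈ convexHull ℝ (V : Set (EuclideanSpace ℝ (Fin d))), ⟪c, x⟫ ≤ ⟪c, w⟫
    · exact ⟨1, one_pos, fun N _ _ _ => hc⟩
    · push_neg at hc
      have hnm : ∀ c : EuclideanSpace ℝ (Fin d), c ≠ 0 → (∀ j : Fin d, 0 ≤ c j) →
          ∃ x ∈ convexHull ℝ (V : Set (EuclideanSpace ℝ (Fin d))), ⟪c, w⟫ < ⟪c, x⟫ := by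
        intro c hc0 hcnn
        obtain ⟨x, hx, hlt⟩ := hc c hc0 hcnn
        exact ⟨x, hx, hlt⟩
      obtain ⟨p, hp, hdom⟩ := exists_dominating V w hmem hnm
      obtain ⟨T, hT, hTN⟩ := not_extreme_of_dominated hd V w hmem p hp hdom
      exact ⟨T, hT, fun N hN _ hext => absurd hext (hTN N hN)⟩
  · exact ⟨1, one_pos, fun N _ h _ => absurd h hmem⟩

/-- Second half of Lemma 4.1: if `v ∈ P = conv V` does not weakly maximize any
nonzero nonnegative functional over `P` (i.e. `v` is not on the non-negative
envelope of `P`), then for all sufficiently large `N`, `v` is not an extreme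
point of `Q_N = conv (P ∪ {-N e₁, …, -N e_d})`.  Equivalently, for `N`
sufficiently large, every point of `P` that is an extreme point of `Q_N` weakly
maximizes some nonzero nonnegative functional over `P`. -/
theorem not_vertex_of_QN_of_not_on_nonneg_envelope
    (d : ℕ) (hd : 0 < d)
    (V : Finset (EuclideanSpace ℝ (Fin d))) (hV : V.Nonempty)
    (v : EuclideanSpace ℝ (Fin d))
    (hv : v ∈ convexHull ℝ (V : Set (EuclideanSpace ℝ (Fin d))))
    (hnotmax : ∀ c : EuclideanSpace ℝ (Fin d), c ≠ 0 → (∀ j : Fin d, 0 ≤ c j) →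
      ∃ x ∈ convexHull ℝ (V : Set (EuclideanSpace ℝ (Fin d))), ⟪c, v⟫ < ⟪c, x⟫) :
    ∃ N₀ : ℝ, 0 < N₀ ∧ ∀ N : ℝ, N₀ ≤ N →
      (v ∉ Set.extremePoints ℝ (convexHull ℝ
        ((V : Set (EuclideanSpace ℝ (Fin d))) ∪
          Set.range (fun j : Fin d =>
            (-N : ℝ) • (EuclideanSpace.single j (1 : ℝ)))))) ∧
      (∀ w ∈ convexHull ℝ (V : Set (EuclideanSpace ℝ (Fin d))),
        w ∈ Set.extremePoints ℝ (convexHull ℝ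
          ((V : Set (EuclideanSpace ℝ (Fin d))) ∪
            Set.range (fun j : Fin d =>
              (-N : ℝ) • (EuclideanSpace.single j (1 : ℝ))))) →
        ∃ c : EuclideanSpace ℝ (Fin d), c ≠ 0 ∧ (∀ j : Fin d, 0 ≤ c j) ∧
          ∀ x ∈ convexHull ℝ (V : Set (EuclideanSpace ℝ (Fin d))),
            ⟪c, x⟫ ≤ ⟪c, w⟫) := by
  classical
  -- radius bound for P
  set R : ℝ := ∑ u ∈ V, ‖u‖ with hR
  have hRnn : 0 ≤ R := Finset.sum_nonneg fun u _ => norm_nonneg u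
  have hball : convexHull ℝ (V : Set (EuclideanSpace ℝ (Fin d)))
      ⊆ Metric.closedBall 0 R := by
    apply convexHull_min _ (convex_closedBall 0 R)
    intro u hu
    rw [Metric.mem_closedBall, dist_zero_right]
    exact Finset.single_le_sum (f := fun u => ‖u‖) (fun i _ => norm_nonneg i) hu
  -- thresholds from key_per_point
  choose T hTpos hT using fun w => key_per_point hd V w
  set N₀ : ℝ := max (R + 1) (max (T v) (V.sup' hV T)) with hN₀
  have hN₀pos : 0 < N₀ := lt_of_lt_of_le (by linarith) (le_max_left _ _)
  refine ⟨N₀, hN₀pos, fun N hN => ?_⟩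
  have hNR : R + 1 ≤ N := le_trans (le_max_left _ _) hN
  have hsecond : ∀ w ∈ convexHull ℝ (V : Set (EuclideanSpace ℝ (Fin d))),
      w ∈ Set.extremePoints ℝ (convexHull ℝ
        ((V : Set (EuclideanSpace ℝ (Fin d))) ∪
          Set.range (fun j : Fin d =>
            (-N : ℝ) • (EuclideanSpace.single j (1 : ℝ))))) →
      ∃ c : EuclideanSpace ℝ (Fin d), c ≠ 0 ∧ (∀ j : Fin d, 0 ≤ c j) ∧
        ∀ x ∈ convexHull ℝ (V : Set (EuclideanSpace ℝ (Fin d))),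
          ⟪c, x⟫ ≤ ⟪c, w⟫ := by
    intro w hw hext
    have hwV : w ∈ (V : Set (EuclideanSpace ℝ (Fin d))) ∪
        Set.range (fun j : Fin d => (-N : ℝ) • (EuclideanSpace.single j (1 : ℝ))) :=
      extremePoints_convexHull_subset hext
    rcases hwV with hwV | ⟨j, hj⟩
    · have h1 : T w ≤ V.sup' hV T := Finset.le_sup' T hwV
      have h2 : T w ≤ N :=
        le_trans (le_trans h1 (le_trans (le_max_right _ _) (le_max_right _ _))) hN
      exact hT w N h2 hw hext
    · exfalso
      have hnorm : ‖w‖ = N := by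
        rw [← hj, norm_smul, EuclideanSpace.norm_single]
        simp [abs_of_pos (by linarith : (0:ℝ) < N)]
      have := hball hw
      rw [Metric.mem_closedBall, dist_zero_right, hnorm] at this
      linarith
  refine ⟨fun hext => ?_, hsecond⟩
  have hTv : T v ≤ N :=
    le_trans (le_trans (le_max_left _ _) (le_max_right _ _)) hN
  obtain ⟨c, hc0, hcnn, hcmax⟩ := hT v N hTv hv hext
  obtain ⟨x, hx, hlt⟩ := hnotmax c hc0 hcnn
  exact absurd (hcmax x hx) (not_le.2 hlt)
end

section
/- Interior-point strengthening in the proof of Lemma 4.1: let v ∈ P and suppose there exists x ∈ P with x_j > v_j for every coordinate j = 1, ..., d. Then there exists N₀ > 0 such that for every N ≥ N₀, v lies in the interior of Q_N = conv(P ∪ {-N e_1, ..., -N e_d}); in particular v can be written as a convex combination of x and the points -N e_1, ..., -N e_d with all coefficients strictly positive. -/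
open scoped RealInnerProductSpace

/-- Interior-point strengthening in the proof of Lemma 4.1: if `v ∈ P = conv V`
is strictly dominated in every coordinate by some `x ∈ P`, then for all
sufficiently large `N`, `v` lies in the interior of
`Q_N = conv (P ∪ {-N e₁, …, -N e_d})`; in particular `v` is a convex combination
of `x` and the points `-N e₁, …, -N e_d` with all coefficients strictly
positive. -/
theorem interior_of_QN_of_dominated
    (d : ℕ) (hd : 0 < d)
    (V : Finset (EuclideanSpace ℝ (Fin d))) (hV : V.Nonempty)
    (v : EuclideanSpace ℝ (Fin d))
    (hv : v ∈ convexHull ℝ (V : Set (EuclideanSpace ℝ (Fin d))))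
    (x : EuclideanSpace ℝ (Fin d))
    (hx : x ∈ convexHull ℝ (V : Set (EuclideanSpace ℝ (Fin d))))
    (hdom : ∀ j : Fin d, v j < x j) :
    ∃ N₀ : ℝ, 0 < N₀ ∧ ∀ N : ℝ, N₀ ≤ N →
      v ∈ interior (convexHull ℝ
        ((V : Set (EuclideanSpace ℝ (Fin d))) ∪
          Set.range (fun j : Fin d =>
            (-N : ℝ) • (EuclideanSpace.single j (1 : ℝ))))) ∧
      ∃ (t : ℝ) (w : Fin d → ℝ), 0 < t ∧ (∀ j : Fin d, 0 < w j) ∧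
        t + ∑ j : Fin d, w j = 1 ∧
        v = t • x + ∑ j : Fin d, w j • ((-N : ℝ) • (EuclideanSpace.single j (1 : ℝ))) := by
  classical
  set sx : ℝ := ∑ j, x j with hsx
  set sv : ℝ := ∑ j, v j with hsv
  set c : Fin d → ℝ := fun j => (sx * v j - sv * x j) / (x j - v j) with hc
  have habs : (0:ℝ) ≤ ∑ j, |c j| := Finset.sum_nonneg fun j _ => abs_nonneg _
  refine ⟨1 + |sv| + |sx| + ∑ j, |c j|, by positivity, ?_⟩
  intro N hN
  have hN1 : (1:ℝ) ≤ N := by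
    have := abs_nonneg sv; have := abs_nonneg sx; linarith
  have hNpos : (0:ℝ) < N := lt_of_lt_of_le one_pos hN1
  have hNne : N ≠ 0 := ne_of_gt hNpos
  have hNsv : 0 < N + sv := by
    have h1 := neg_abs_le sv
    have := abs_nonneg sx
    linarith
  have hNsx : 0 < N + sx := by
    have h1 := neg_abs_le sx
    have := abs_nonneg sv
    linarith
  have hNsxne : N + sx ≠ 0 := ne_of_gt hNsx
  -- the coefficient functions
  set T : EuclideanSpace ℝ (Fin d) → ℝ := fun y => (N + ∑ j, y j) / (N + sx) with hT
  set W : EuclideanSpace ℝ (Fin d) → Fin d → ℝ := fun y j => (T y * x j - y j) / N with hW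
  -- key positivity at v
  have hkey : ∀ j, 0 < T v * x j - v j := by
    intro j
    have hxj : 0 < x j - v j := sub_pos.2 (hdom j)
    have hcj : c j < N := by
      have h1 : |c j| ≤ ∑ i, |c i| :=
        Finset.single_le_sum (f := fun i => |c i|) (fun i _ => abs_nonneg _) (Finset.mem_univ j)
      have h2 := le_abs_self (c j)
      have := abs_nonneg sv; have := abs_nonneg sx
      linarith
    have h1 : sx * v j - sv * x j < N * (x j - v j) := by
      have := (div_lt_iff₀ hxj).1 hcj
      linarith
    have heq : T v * x j - v j = (N * (x j - v j) - (sx * v j - sv * x j)) / (N + sx) := by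
      rw [hT]; field_simp; ring
    rw [heq]
    exact div_pos (by linarith) hNsx
  have hTv : 0 < T v := div_pos hNsv hNsx
  -- representation identity for arbitrary y
  have hsum : ∀ y : EuclideanSpace ℝ (Fin d), T y + ∑ j, W y j = 1 := by
    intro y
    have : ∑ j, W y j = (T y * sx - ∑ j, y j) / N := by
      rw [hW]
      simp only
      rw [← Finset.sum_div, Finset.sum_sub_distrib, ← Finset.mul_sum]
    rw [this, hT]
    field_simp
    ring
  have hrep : ∀ y : EuclideanSpace ℝ (Fin d),
      y = T y • x + ∑ j, W y j • ((-N : ℝ) • (EuclideanSpace.single j (1 : ℝ))) := by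
    intro y
    ext k
    have hs : (∑ j, W y j • ((-N : ℝ) • (EuclideanSpace.single j (1 : ℝ)))) k
        = ∑ j, W y j * (-N * (if k = j then (1:ℝ) else 0)) := by
      rw [WithLp.ofLp_sum, Finset.sum_apply]
      refine Finset.sum_congr rfl fun j _ => ?_
      rw [PiLp.smul_apply, PiLp.smul_apply, EuclideanSpace.single_apply]
      simp [mul_comm]
    have : (T y • x + ∑ j, W y j • ((-N : ℝ) • (EuclideanSpace.single j (1 : ℝ)))) k
        = T y * x k + ∑ j, W y j * (-N * (if k = j then (1:ℝ) else 0)) := by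
      rw [PiLp.add_apply, PiLp.smul_apply, hs]; rfl
    rw [this]
    have : ∑ j, W y j * (-N * (if k = j then (1:ℝ) else 0)) = - (N * W y k) := by
      rw [Finset.sum_eq_single k]
      · simp; ring
      · intro b _ hb; simp [Ne.symm hb]
      · intro h; exact absurd (Finset.mem_univ k) h
    rw [this, hW]
    field_simp
    ring
  -- membership in the convex hull for all y with positive coefficients
  set S : Set (EuclideanSpace ℝ (Fin d)) :=
    (V : Set (EuclideanSpace ℝ (Fin d))) ∪
      Set.range (fun j : Fin d => (-N : ℝ) • (EuclideanSpace.single j (1 : ℝ))) with hS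
  have hxS : x ∈ convexHull ℝ S :=
    convexHull_mono Set.subset_union_left hx
  have heS : ∀ j : Fin d, ((-N : ℝ) • (EuclideanSpace.single j (1 : ℝ))) ∈ convexHull ℝ S :=
    fun j => subset_convexHull ℝ S (Set.mem_union_right _ ⟨j, rfl⟩)
  have hmem : ∀ y : EuclideanSpace ℝ (Fin d), 0 ≤ T y → (∀ j, 0 ≤ W y j) →
      y ∈ convexHull ℝ S := by
    intro y hT0 hW0
    have := Convex.sum_mem (t := (Finset.univ : Finset (Option (Fin d))))
      (w := fun o => Option.elim o (T y) (W y))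
      (z := fun o => Option.elim o x (fun j => (-N : ℝ) • (EuclideanSpace.single j (1 : ℝ))))
      (convex_convexHull ℝ S)
      (fun o _ => by cases o with
        | none => exact hT0
        | some j => exact hW0 j)
      (by rw [Fintype.sum_option]; exact hsum y)
      (fun o _ => by cases o with
        | none => exact hxS
        | some j => exact heS j)
    rw [Fintype.sum_option] at this
    simp only [Option.elim] at this
    rw [hrep y]
    exact this
  constructor
  · -- interior membership
    have hTcont : Continuous T := by
      apply Continuous.div_const
      exact continuous_const.add (continuous_finset_sum _ fun j _ => PiLp.continuous_apply 2 _ j)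
    have hWcont : ∀ j, Continuous fun y => W y j := by
      intro j
      apply Continuous.div_const
      exact (hTcont.mul continuous_const).sub (PiLp.continuous_apply 2 _ j)
    set U : Set (EuclideanSpace ℝ (Fin d)) :=
      {y | 0 < T y} ∩ ⋂ j, {y | 0 < W y j} with hU
    have hUopen : IsOpen U := by
      apply IsOpen.inter
      · exact isOpen_lt continuous_const hTcont
      · exact isOpen_iInter_of_finite fun j => isOpen_lt continuous_const (hWcont j)
    have hvU : v ∈ U := by
      refine ⟨hTv, Set.mem_iInter.2 fun j => ?_⟩
      exact div_pos (hkey j) hNpos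
    have hUsub : U ⊆ convexHull ℝ S := by
      rintro y ⟨h1, h2⟩
      exact hmem y (le_of_lt h1) fun j => le_of_lt (Set.mem_iInter.1 h2 j)
    exact interior_maximal hUsub hUopen hvU
  · exact ⟨T v, W v, hTv, fun j => div_pos (hkey j) hNpos, hsum v, hrep v⟩
end
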